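/- arXiv:1904.04582 — 5 statements merged into one kernel-verified Lean document; each statement's English description precedes it below -/
import Mathlib

section
/- Let Q be a monic irreducible polynomial in F_q[t] and k a positive integer. Then (1/phi(Q)) * sum over nontrivial Dirichlet characters chi mod Q of L^{(k)}(1/2, chi) equals -((-log q)^k / (q^{1/2}-1)) * (deg Q)^k / |Q|^{1/2} + O_k((log q)^k (deg Q)^{k-1} / |Q|^{1/2}) as deg Q -> infinity. -/
set_option maxHeartbeats 1000000
open Finset

lemma aux_nat_le (x : ℝ) (hx : (1.41:ℝ) ≤ x) (D : ℕ) : (D:ℝ) ≤ 3 * x ^ D := by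
  have h1 : (1:ℝ) ≤ x := by linarith
  have key : ∀ n : ℕ, (n:ℝ) ≤ 3 * (1.41:ℝ) ^ n := by
    intro n
    induction n with
    | zero => norm_num
    | succ m ih =>
      have h2 : (1:ℝ) ≤ (1.41:ℝ)^m := one_le_pow₀ (by norm_num)
      push_cast
      rw [pow_succ]
      nlinarith
  calc (D:ℝ) ≤ 3 * (1.41:ℝ)^D := key D
    _ ≤ 3 * x ^ D := by
        have := pow_le_pow_left₀ (by norm_num : (0:ℝ) ≤ 1.41) hx D
        linarith

lemma aux_geom (x : ℝ) (hx1 : 1 < x) (m : ℕ) : ∑ n ∈ range m, x^n ≤ x^m/(x-1) := by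
  have hx0 : 0 < x - 1 := by linarith
  induction m with
  | zero =>
    simp only [range_zero, sum_empty, pow_zero]
    exact div_nonneg zero_le_one hx0.le
  | succ p ih =>
    rw [Finset.sum_range_succ]
    have h : x^p/(x-1) + x^p = x^(p+1)/(x-1) := by field_simp; ring
    linarith

lemma aux_pow_diff (k : ℕ) (a b : ℝ) (h0 : 0 ≤ b) (hba : b ≤ a) :
    a^k - b^k ≤ k * a^(k-1) * (a - b) := by
  induction k with
  | zero => simp
  | succ m ih =>
    rcases Nat.eq_zero_or_pos m with hm | hm
    · subst hm; simp
    · have ha0 : 0 ≤ a := h0.trans hba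
      have hpow : b ^ m ≤ a ^ m := pow_le_pow_left₀ h0 hba m
      have h1 : a^(m+1) - b^(m+1) = a * (a^m - b^m) + (a-b) * b^m := by ring
      have h2 : a * (a^m - b^m) ≤ a * (m * a^(m-1) * (a-b)) :=
        mul_le_mul_of_nonneg_left ih ha0
      have h3 : a * a^(m-1) = a^m := by
        rw [← pow_succ']
        congr 1
        omega
      have h4 : (a-b) * b^m ≤ (a-b) * a^m :=
        mul_le_mul_of_nonneg_left hpow (by linarith)
      have h5 : a * ((m:ℝ) * a^(m-1) * (a-b)) = m * a^m * (a-b) := by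
        rw [← h3]; ring
      have : a^(m+1) - b^(m+1) ≤ (m:ℝ) * a^m * (a-b) + (a-b)*a^m := by
        rw [h1]; rw [h5] at h2; linarith
      calc a^(m+1) - b^(m+1) ≤ (m:ℝ) * a^m * (a-b) + (a-b)*a^m := this
        _ = ((m:ℝ)+1) * a^(m+1-1) * (a-b) := by simp; ring
        _ = (↑(m+1):ℝ) * a^(m+1-1) * (a-b) := by push_cast; ring

lemma aux_W (x : ℝ) (hx1 : 1 < x) (D : ℕ) :
    ∑ n ∈ range D, ((D:ℝ) - n) * x^n ≤ x^(D+1)/(x-1)^2 := by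
  have hx0 : 0 < x - 1 := by linarith
  induction D with
  | zero =>
    simp only [range_zero, sum_empty]
    positivity
  | succ p ih =>
    have hstep : ∑ n ∈ range (p+1), ((↑(p+1):ℝ) - n) * x^n
        = (∑ n ∈ range p, ((p:ℝ) - n) * x^n) + ∑ n ∈ range (p+1), x^n := by
      have hc : ∑ n ∈ range p, ((↑(p+1):ℝ) - n) * x^n
          = ∑ n ∈ range p, (((p:ℝ) - n) * x^n + x^n) :=
        Finset.sum_congr rfl fun n _ => by push_cast; ring
      rw [Finset.sum_range_succ, hc, Finset.sum_add_distrib,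
        Finset.sum_range_succ (fun n => x^n)]
      push_cast
      ring
    rw [hstep]
    have hg := aux_geom x hx1 (p+1)
    have hxp : (0:ℝ) < x^(p+1) := by positivity
    have heq : x^(p+1)/(x-1)^2 + x^(p+1)/(x-1) = x^(p+2)/(x-1)^2 := by
      field_simp
      ring
    linarith

lemma aux_fin (a E t : ℝ) (hE : 0 ≤ a*E) (ht : 2 ≤ t^2) :
    a*E*t^2 ≤ 2*(a*E)*(t^2-1) := by nlinarith

lemma key_real (k : ℕ) (hk : 1 ≤ k) (x : ℝ) (hx : Real.sqrt 2 ≤ x) (D : ℕ) (hD : 1 ≤ D) :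
    |(D:ℝ)^k / ((x-1) * x^D) - (∑ n ∈ range D, (n:ℝ)^k * x^n) / (x^(2*D) - 1)|
      ≤ (16 + 20*k) * (D:ℝ)^(k-1) / x^D := by
  have hsq2 : (Real.sqrt 2)^2 = 2 := Real.sq_sqrt (by norm_num)
  have hx141 : (1.41:ℝ) ≤ x := by nlinarith [Real.sqrt_nonneg 2]
  have hx1 : 1 < x := by linarith
  have hx0 : 0 < x - 1 := by linarith
  have hx2 : 2 ≤ x^2 := by
    nlinarith [mul_nonneg (sub_nonneg.mpr hx) (by positivity : (0:ℝ) ≤ x + Real.sqrt 2)]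
  have hC1 : (D:ℝ) ≤ 3 * x^D := aux_nat_le x hx141 D
  have hgeom := geom_sum_mul x D
  have hW : (∑ n ∈ range D, ((D:ℝ)^k - (n:ℝ)^k) * x^n)
      ≤ (k:ℝ) * (D:ℝ)^(k-1) * (x^D*x/(x-1)^2) := by
    have h2 : ∑ n ∈ range D, ((D:ℝ)^k - (n:ℝ)^k) * x^n
        ≤ ∑ n ∈ range D, ((k:ℝ) * (D:ℝ)^(k-1) * (((D:ℝ) - n) * x^n)) := by
      apply Finset.sum_le_sum
      intro n hn
      have hn' : (n:ℝ) ≤ D := by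
        have := Finset.mem_range.mp hn; exact_mod_cast this.le
      have hd := aux_pow_diff k (D:ℝ) (n:ℝ) (by positivity) hn'
      have hxn : (0:ℝ) ≤ x^n := by positivity
      nlinarith
    have h3 : ∑ n ∈ range D, ((k:ℝ) * (D:ℝ)^(k-1) * (((D:ℝ) - n) * x^n))
        = (k:ℝ) * (D:ℝ)^(k-1) * ∑ n ∈ range D, ((D:ℝ) - n) * x^n := by
      rw [Finset.mul_sum]
    have h4 := aux_W x hx1 D
    have hkD : (0:ℝ) ≤ (k:ℝ) * (D:ℝ)^(k-1) := by positivity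
    have h5 := mul_le_mul_of_nonneg_left h4 hkD
    have h6 : x^(D+1) = x^D*x := pow_succ x D
    rw [h6] at h5
    linarith
  have hsub : (D:ℝ)^k * (∑ n ∈ range D, x^n) - (∑ n ∈ range D, (n:ℝ)^k * x^n)
      = ∑ n ∈ range D, ((D:ℝ)^k - (n:ℝ)^k) * x^n := by
    rw [Finset.mul_sum, ← Finset.sum_sub_distrib]
    exact Finset.sum_congr rfl fun n _ => by ring
  have hSG : (∑ n ∈ range D, (n:ℝ)^k * x^n) ≤ (D:ℝ)^k * (∑ n ∈ range D, x^n) := by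
    rw [Finset.mul_sum]
    apply Finset.sum_le_sum
    intro n hn
    have hn' : (n:ℝ) ≤ D := by
      have := Finset.mem_range.mp hn; exact_mod_cast this.le
    have h1 : (n:ℝ)^k ≤ (D:ℝ)^k := pow_le_pow_left₀ (by positivity) hn' k
    have hxn : (0:ℝ) ≤ x^n := by positivity
    nlinarith
  have hS0 : 0 ≤ (∑ n ∈ range D, (n:ℝ)^k * x^n) :=
    Finset.sum_nonneg (fun n _ => by positivity)
  -- abstract the quantities
  obtain ⟨S, hS⟩ : ∃ S, (∑ n ∈ range D, (n:ℝ)^k * x^n) = S := ⟨_, rfl⟩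
  obtain ⟨g, hgd⟩ : ∃ g, (∑ n ∈ range D, x^n) = g := ⟨_, rfl⟩
  obtain ⟨t, ht⟩ : ∃ t, x^D = t := ⟨_, rfl⟩
  obtain ⟨E, hEd⟩ : ∃ E, (D:ℝ)^(k-1) = E := ⟨_, rfl⟩
  have h2D : x^(2*D) = t^2 := by rw [Nat.mul_comm, pow_mul, ht]
  rw [hS, ht, h2D, hEd]
  rw [hS, hgd] at hSG hsub
  rw [hgd] at hgeom
  rw [ht] at hC1 hW hgeom
  rw [hS] at hS0
  rw [hEd] at hW
  have hDk : (D:ℝ)^k = (D:ℝ) * E := by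
    rw [← hEd]
    conv_lhs => rw [show k = (k-1)+1 by omega]
    rw [pow_succ]; ring
  have hE0 : (0:ℝ) ≤ E := by rw [← hEd]; positivity
  have ht1 : 1 < t := by rw [← ht]; exact one_lt_pow₀ hx1 (by omega)
  have ht0 : 0 < t := by linarith
  have htx : x ≤ t := by rw [← ht]; exact le_self_pow₀ hx1.le (by omega)
  have ht2 : 2 ≤ t^2 := by nlinarith
  have hphi0 : 0 < t^2 - 1 := by nlinarith
  have hxt : 0 < (x-1)*t := by positivity
  have hDk0 : (0:ℝ) < (D:ℝ)^k := by positivity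
  -- rewrite difference as single fraction
  have hEq : (D:ℝ)^k / ((x-1) * t) - S / (t^2 - 1)
      = ((D:ℝ)^k * (t^2-1) / ((x-1)*t) - S) / (t^2-1) := by
    field_simp
  rw [hEq]
  obtain ⟨N, hN⟩ : ∃ N, (D:ℝ)^k * (t^2-1) / ((x-1)*t) - S = N := ⟨_, rfl⟩
  rw [hN]
  have hgval : g = (t-1)/(x-1) := by
    field_simp
    linarith [hgeom]
  have hmainG : (D:ℝ)^k * g ≤ (D:ℝ)^k * (t^2-1) / ((x-1)*t) := by
    rw [le_div_iff₀ hxt, hgval]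
    have hg2 : (t-1)/(x-1) * ((x-1)*t) = (t-1)*t := by field_simp
    calc (D:ℝ)^k * ((t-1)/(x-1)) * ((x-1)*t) = (D:ℝ)^k * ((t-1)*t) := by
          rw [mul_assoc, hg2]
      _ ≤ (D:ℝ)^k * (t^2-1) := by nlinarith
  have hN0 : 0 ≤ N := by rw [← hN]; linarith
  have hbr : (D:ℝ)^k * (t^2-1) / ((x-1)*t) - (D:ℝ)^k * g ≤ (D:ℝ)^k / (x-1) := by
    have heq2 : (D:ℝ)^k * (t^2-1) / ((x-1)*t) - (D:ℝ)^k * g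
        = (D:ℝ)^k * (1 - t⁻¹) / (x-1) := by
      rw [hgval]
      field_simp
      ring
    rw [heq2]
    have hti : 0 ≤ t⁻¹ := by positivity
    have hnum : (D:ℝ)^k * (1 - t⁻¹) ≤ (D:ℝ)^k := by nlinarith
    gcongr
    all_goals nlinarith
  have hW2 : (D:ℝ)^k * g - S ≤ (k:ℝ) * E * (t*x/(x-1)^2) := by
    rw [hsub]
    exact hW
  have hNB : N ≤ (D:ℝ)^k / (x-1) + (k:ℝ) * E * (t*x/(x-1)^2) := by
    rw [← hN]
    linarith
  have habs : |N / (t^2-1)| = N / (t^2-1) := abs_of_nonneg (by positivity)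
  rw [habs, div_le_div_iff₀ hphi0 ht0]
  have hxx : x ≤ 10 * (x-1)^2 := by nlinarith
  have h041 : (0.41:ℝ) ≤ x - 1 := by linarith
  have hB1 : (D:ℝ)^k / (x-1) * t ≤ 8 * E * t^2 := by
    rw [hDk, div_mul_eq_mul_div, div_le_iff₀ hx0]
    nlinarith [mul_le_mul_of_nonneg_left hC1 (mul_nonneg hE0 ht0.le),
      mul_nonneg (mul_nonneg hE0 (mul_nonneg ht0.le ht0.le)) (by linarith : (0:ℝ) ≤ 8*(x-1) - 3)]
  have hk0 : (0:ℝ) ≤ (k:ℝ) := by positivity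
  have hB2 : (k:ℝ) * E * (t*x/(x-1)^2) * t ≤ 10 * (k:ℝ) * E * t^2 := by
    have hpos : (0:ℝ) < (x-1)^2 := by positivity
    have hre : (k:ℝ)*E*(t*x/(x-1)^2)*t = ((k:ℝ)*E*t*x*t)/(x-1)^2 := by ring
    rw [hre, div_le_iff₀ hpos]
    nlinarith [mul_nonneg (mul_nonneg (mul_nonneg hk0 hE0) (mul_nonneg ht0.le ht0.le))
      (sub_nonneg.mpr hxx)]
  have hNt : N * t ≤ (8 + 10*(k:ℝ)) * E * t^2 := by
    have h := mul_le_mul_of_nonneg_right hNB ht0.le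
    calc N * t ≤ ((D:ℝ)^k / (x-1) + (k:ℝ) * E * (t*x/(x-1)^2)) * t := h
      _ = (D:ℝ)^k / (x-1) * t + (k:ℝ) * E * (t*x/(x-1)^2) * t := by ring
      _ ≤ 8 * E * t^2 + 10 * (k:ℝ) * E * t^2 := by linarith
      _ = (8 + 10*(k:ℝ)) * E * t^2 := by ring
  calc N * t ≤ (8 + 10*(k:ℝ)) * E * t^2 := hNt
    _ ≤ 2*((8 + 10*(k:ℝ)) * E)*(t^2 - 1) := by
        have := aux_fin (8 + 10*(k:ℝ)) E t (by positivity) ht2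
        linarith
    _ = (16 + 20*(k:ℝ)) * E * (t^2 - 1) := by ring
open Polynomial

variable {F : Type} [Field F]

noncomputable def polyOf (n : ℕ) (c : Fin n → F) : Polynomial F :=
  X ^ n + ∑ i : Fin n, C (c i) * X ^ (i : ℕ)

lemma coeff_sumpart (n : ℕ) (c : Fin n → F) (m : ℕ) :
    (∑ i : Fin n, C (c i) * X ^ (i : ℕ)).coeff m
      = if h : m < n then c ⟨m, h⟩ else 0 := by
  rw [finset_sum_coeff]
  simp only [coeff_C_mul, coeff_X_pow]
  by_cases h : m < n
  · rw [dif_pos h]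
    rw [Finset.sum_eq_single (⟨m, h⟩ : Fin n)]
    · simp
    · intro i _ hi
      have : m ≠ (i : ℕ) := fun hc => hi (by ext; exact hc.symm)
      simp [this]
    · simp
  · rw [dif_neg h]
    apply Finset.sum_eq_zero
    intro i _
    have : m ≠ (i : ℕ) := by
      have := i.isLt; omega
    simp [this]

lemma sumpart_degree_lt (n : ℕ) (c : Fin n → F) :
    (∑ i : Fin n, C (c i) * X ^ (i : ℕ)).degree < (n : WithBot ℕ) := by
  rw [degree_lt_iff_coeff_zero]
  intro m hm
  have hm' : n ≤ m := by exact_mod_cast hm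
  rw [coeff_sumpart, dif_neg (by omega)]

lemma monic_polyOf (n : ℕ) (c : Fin n → F) : (polyOf n c).Monic := by
  apply (monic_X_pow n).add_of_left
  rw [degree_X_pow]
  exact sumpart_degree_lt n c

lemma natDegree_polyOf (n : ℕ) (c : Fin n → F) : (polyOf n c).natDegree = n := by
  apply natDegree_eq_of_degree_eq_some
  rw [polyOf, degree_add_eq_left_of_degree_lt, degree_X_pow]
  rw [degree_X_pow]
  exact sumpart_degree_lt n c

lemma coeff_polyOf (n : ℕ) (c : Fin n → F) (m : ℕ) :
    (polyOf n c).coeff m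
      = (if m = n then 1 else 0) + (if h : m < n then c ⟨m, h⟩ else 0) := by
  rw [polyOf, coeff_add, coeff_X_pow, coeff_sumpart]

noncomputable def polyEquiv (D : ℕ) :
    (Σ n : Fin D, (Fin (n : ℕ) → F)) ≃ {A : Polynomial F // A.Monic ∧ A.natDegree < D} := by
  apply Equiv.ofBijective
    (fun p => ⟨polyOf (p.1 : ℕ) p.2, monic_polyOf _ _, by rw [natDegree_polyOf]; exact p.1.isLt⟩)
  constructor
  · rintro ⟨⟨n, hn⟩, c⟩ ⟨⟨m, hm⟩, d⟩ h
    rw [Subtype.mk.injEq] at h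
    have hnm : n = m := by
      have h1 := natDegree_polyOf n c
      have h2 := natDegree_polyOf m d
      rw [← h1, h, h2]
    subst hnm
    simp only [Sigma.mk.inj_iff, heq_eq_eq, Fin.mk.injEq, true_and]
    funext i
    have hc := coeff_polyOf n c (i : ℕ)
    have hd := coeff_polyOf n d (i : ℕ)
    rw [h, hd] at hc
    rw [dif_pos i.isLt, dif_pos i.isLt] at hc
    have : d ⟨(i:ℕ), i.isLt⟩ = d i := by congr 1
    rw [this] at hc
    have : c ⟨(i:ℕ), i.isLt⟩ = c i := by congr 1
    rw [this] at hc
    exact (add_left_cancel hc).symm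
  · rintro ⟨A, hAm, hAd⟩
    refine ⟨⟨⟨A.natDegree, hAd⟩, fun i => A.coeff (i : ℕ)⟩, ?_⟩
    apply Subtype.ext
    show polyOf A.natDegree _ = A
    apply Polynomial.ext
    intro m
    rw [coeff_polyOf]
    rcases lt_trichotomy m A.natDegree with h | h | h
    · rw [if_neg h.ne, dif_pos h, zero_add]
    · subst h
      rw [if_pos rfl, dif_neg (lt_irrefl _), add_zero, hAm.coeff_natDegree]
    · rw [if_neg h.ne', dif_neg (by omega), add_zero,
        (coeff_eq_zero_of_natDegree_lt h).symm]
open Finset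

lemma iter_deriv_sum {ι : Type*} [Fintype ι] (c w : ι → ℂ) (hw : ∀ i, w i ≠ 0) (k : ℕ) :
    iteratedDeriv k (fun s : ℂ => ∑ i, c i * (w i) ^ (-s)) =
      fun s => ∑ i, c i * ((-Complex.log (w i))^k * (w i) ^ (-s)) := by
  induction k with
  | zero =>
    funext s
    simp
  | succ m ih =>
    rw [iteratedDeriv_succ, ih]
    funext s
    have h : HasDerivAt (fun s : ℂ => ∑ i, c i * ((-Complex.log (w i))^m * (w i) ^ (-s)))
        (∑ i, c i * ((-Complex.log (w i))^(m+1) * (w i) ^ (-s))) s := by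
      apply HasDerivAt.fun_sum
      intro i _
      have h1 : HasDerivAt (fun s : ℂ => (w i) ^ (-s))
          ((w i)^(-s) * Complex.log (w i) * (-1)) s :=
        HasDerivAt.const_cpow (hasDerivAt_neg s) (Or.inl (hw i))
      have h2 := h1.const_mul (c i * (-Complex.log (w i))^m)
      have h3 : (fun s : ℂ => c i * ((-Complex.log (w i))^m * (w i)^(-s)))
          = fun s : ℂ => (c i * (-Complex.log (w i))^m) * (w i)^(-s) := by
        funext u; ring
      rw [h3]
      exact h2.congr_deriv (by ring)
    rw [h.deriv]

-- orthogonality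
lemma mulchar_orth (R : Type) [CommRing R] [Finite R] [DecidableEq R]
    [Fintype (MulChar R ℂ)] {a : R} (ha : IsUnit a) :
    ∑ χ : MulChar R ℂ, χ a = if a = 1 then (Nat.card Rˣ : ℂ) else 0 := by
  haveI : NeZero ((Monoid.exponent Rˣ : ℕ) : ℂ) :=
    ⟨Nat.cast_ne_zero.mpr Monoid.exponent_ne_zero_of_finite⟩
  haveI hE : HasEnoughRootsOfUnity ℂ (Monoid.exponent Rˣ) := inferInstance
  split_ifs with h1
  · subst h1
    have : ∀ χ : MulChar R ℂ, χ (1 : R) = 1 := fun χ => map_one χ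
    rw [Finset.sum_congr rfl (fun χ _ => this χ), Finset.sum_const, Finset.card_univ,
      nsmul_eq_mul, mul_one, ← Nat.card_eq_fintype_card,
      MulChar.card_eq_card_units_of_hasEnoughRootsOfUnity R ℂ]
  · obtain ⟨χ, hχ⟩ := MulChar.exists_apply_ne_one_of_hasEnoughRootsOfUnity R ℂ h1
    refine eq_zero_of_mul_eq_self_left hχ ?_
    rw [Finset.mul_sum]
    simp only [← MulChar.mul_apply]
    exact Fintype.sum_bijective _ (Group.mulLeft_bijective χ) _ _ fun χ' => rfl
theorem stmt_8 (k : ℕ) (hk : 1 ≤ k) :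
    ∃ C : ℝ, 0 < C ∧
      ∀ (F : Type) [Field F] [Fintype F] (Q : Polynomial F), Q.Monic → Irreducible Q →
        ‖((Nat.card (Polynomial F ⧸ Ideal.span {Q})ˣ : ℂ)⁻¹ *
                (∑' χ : {χ : MulChar (Polynomial F ⧸ Ideal.span {Q}) ℂ // χ ≠ 1},
                  iteratedDeriv k
                    (fun s : ℂ =>
                      ∑' A : {A : Polynomial F // A.Monic ∧ A.natDegree < Q.natDegree},
                        χ.1 (Ideal.Quotient.mk (Ideal.span {Q}) A.1) *
                          ((Fintype.card F : ℂ) ^ (A.1.natDegree : ℂ)) ^ (-s))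
                    (1 / 2)) +
              ((-(Real.log (Fintype.card F)) : ℂ) ^ k /
                    ((Real.sqrt (Fintype.card F) : ℂ) - 1)) *
                (Q.natDegree : ℂ) ^ k /
                (Real.sqrt ((Fintype.card F : ℝ) ^ Q.natDegree) : ℂ))‖
          ≤ C * (Real.log (Fintype.card F)) ^ k * (Q.natDegree : ℝ) ^ (k - 1) /
              Real.sqrt ((Fintype.card F : ℝ) ^ Q.natDegree) := by
  refine ⟨16 + 20 * k, by positivity, ?_⟩
  intro F _ _ Q hQm hQirr
  classical
  -- ## Setup
  have hQ0 : Q ≠ 0 := hQm.ne_zero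
  have hD1 : 1 ≤ Q.natDegree := hQirr.natDegree_pos
  have hq2 : 2 ≤ Fintype.card F := Fintype.one_lt_card
  have hq0C : (Fintype.card F : ℂ) ≠ 0 := Nat.cast_ne_zero.mpr (by omega)
  haveI hMax : (Ideal.span {Q}).IsMaximal := PrincipalIdealRing.isMaximal_of_irreducible hQirr
  haveI hfinR : Finite (Polynomial F ⧸ Ideal.span {Q}) :=
    Finite.of_equiv _ (AdjoinRoot.powerBasis hQ0).basis.equivFun.toEquiv.symm
  haveI fintQ : Fintype (Polynomial F ⧸ Ideal.span {Q}) := Fintype.ofFinite _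
  have hcard : Fintype.card (Polynomial F ⧸ Ideal.span {Q}) = Fintype.card F ^ Q.natDegree := by
    letI fintAR : Fintype (AdjoinRoot Q) := fintQ
    have h := Module.card_fintype (AdjoinRoot.powerBasis hQ0).basis
    rw [Fintype.card_fin, AdjoinRoot.powerBasis_dim] at h
    unfold AdjoinRoot at h
    exact h
  have hφ : Nat.card (Polynomial F ⧸ Ideal.span {Q})ˣ = Fintype.card F ^ Q.natDegree - 1 := by
    letI : Field (Polynomial F ⧸ Ideal.span {Q}) := Ideal.Quotient.field _
    have h1 := Nat.card_units (Polynomial F ⧸ Ideal.span {Q})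
    have h2 : Nat.card (Polynomial F ⧸ Ideal.span {Q}) = Fintype.card F ^ Q.natDegree := by
      rw [Nat.card_eq_fintype_card, hcard]
    rw [h2] at h1
    exact h1
  haveI : Fintype (MulChar (Polynomial F ⧸ Ideal.span {Q}) ℂ) := Fintype.ofFinite _
  haveI : Fintype {χ : MulChar (Polynomial F ⧸ Ideal.span {Q}) ℂ // χ ≠ 1} := Fintype.ofFinite _
  haveI fintA : Fintype {A : Polynomial F // A.Monic ∧ A.natDegree < Q.natDegree} :=
    Fintype.ofEquiv _ (polyEquiv Q.natDegree)
  -- ## basic unit facts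
  have hAunit : ∀ A : {A : Polynomial F // A.Monic ∧ A.natDegree < Q.natDegree},
      IsUnit (Ideal.Quotient.mk (Ideal.span {Q}) A.1) := by
    intro A
    have hne : Ideal.Quotient.mk (Ideal.span {Q}) A.1 ≠ 0 := by
      rw [Ne, Ideal.Quotient.eq_zero_iff_mem, Ideal.mem_span_singleton]
      intro h0
      have := Polynomial.natDegree_le_of_dvd h0 A.2.1.ne_zero
      have := A.2.2
      omega
    letI : Field (Polynomial F ⧸ Ideal.span {Q}) := Ideal.Quotient.field _
    exact isUnit_iff_ne_zero.mpr hne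
  have hA1 : ∀ A : {A : Polynomial F // A.Monic ∧ A.natDegree < Q.natDegree},
      (Ideal.Quotient.mk (Ideal.span {Q}) A.1 = 1 ↔ A.1 = 1) := by
    intro A
    constructor
    · intro h
      have h1 : Ideal.Quotient.mk (Ideal.span {Q}) A.1
          = Ideal.Quotient.mk (Ideal.span {Q}) 1 := by rw [h, map_one]
      rw [Ideal.Quotient.eq, Ideal.mem_span_singleton] at h1
      by_contra hne
      have hsub0 : A.1 - 1 ≠ 0 := sub_ne_zero.mpr hne
      have h2 := Polynomial.natDegree_le_of_dvd h1 hsub0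
      have h3 := Polynomial.natDegree_sub_le A.1 (1 : Polynomial F)
      rw [Polynomial.natDegree_one] at h3
      have := A.2.2
      simp only [le_max_iff, Nat.le_zero] at h3
      omega
    · intro h; rw [h, map_one]
  -- ## the basic term
  obtain ⟨Tn, hTn⟩ : ∃ Tn : ℕ → ℂ, Tn = fun n : ℕ =>
      (-Complex.log ((Fintype.card F : ℂ) ^ n)) ^ k *
        ((Fintype.card F : ℂ) ^ n) ^ (-(1/2) : ℂ) := ⟨_, rfl⟩
  -- ## Step A : compute the iterated derivative
  have hIter : ∀ χ : MulChar (Polynomial F ⧸ Ideal.span {Q}) ℂ,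
      iteratedDeriv k
        (fun s : ℂ =>
          ∑' A : {A : Polynomial F // A.Monic ∧ A.natDegree < Q.natDegree},
            χ (Ideal.Quotient.mk (Ideal.span {Q}) A.1) *
              ((Fintype.card F : ℂ) ^ (A.1.natDegree : ℂ)) ^ (-s)) (1/2)
      = ∑ A : {A : Polynomial F // A.Monic ∧ A.natDegree < Q.natDegree},
          χ (Ideal.Quotient.mk (Ideal.span {Q}) A.1) * Tn A.1.natDegree := by
    intro χ
    have hfun : (fun s : ℂ =>
          ∑' A : {A : Polynomial F // A.Monic ∧ A.natDegree < Q.natDegree},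
            χ (Ideal.Quotient.mk (Ideal.span {Q}) A.1) *
              ((Fintype.card F : ℂ) ^ (A.1.natDegree : ℂ)) ^ (-s))
        = fun s : ℂ =>
          ∑ A : {A : Polynomial F // A.Monic ∧ A.natDegree < Q.natDegree},
            (fun B : {A : Polynomial F // A.Monic ∧ A.natDegree < Q.natDegree} =>
              χ (Ideal.Quotient.mk (Ideal.span {Q}) B.1)) A *
              ((fun B : {A : Polynomial F // A.Monic ∧ A.natDegree < Q.natDegree} =>
                (Fintype.card F : ℂ) ^ B.1.natDegree) A) ^ (-s) := by
      funext s
      rw [tsum_fintype]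
      exact Finset.sum_congr rfl fun A _ => by rw [Complex.cpow_natCast]
    rw [hfun, iter_deriv_sum _ _
      (fun A => pow_ne_zero _ hq0C) k, hTn]
  -- ## Step B : character sums
  have horth : ∀ A : {A : Polynomial F // A.Monic ∧ A.natDegree < Q.natDegree},
      ∑ χ ∈ (Finset.univ.erase (1 : MulChar (Polynomial F ⧸ Ideal.span {Q}) ℂ)),
        χ (Ideal.Quotient.mk (Ideal.span {Q}) A.1)
      = (if Ideal.Quotient.mk (Ideal.span {Q}) A.1 = 1
          then ((Fintype.card F ^ Q.natDegree - 1 : ℕ) : ℂ) else 0) - 1 := by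
    intro A
    have h := Finset.sum_erase_add Finset.univ
      (fun χ : MulChar (Polynomial F ⧸ Ideal.span {Q}) ℂ =>
        χ (Ideal.Quotient.mk (Ideal.span {Q}) A.1)) (Finset.mem_univ 1)
    simp only [MulChar.one_apply (hAunit A), mulchar_orth _ (hAunit A), hφ] at h
    linear_combination h
  -- ## Step C : sum over characters of L^{(k)}
  have hχsum : (∑' χ : {χ : MulChar (Polynomial F ⧸ Ideal.span {Q}) ℂ // χ ≠ 1},
      iteratedDeriv k
        (fun s : ℂ =>
          ∑' A : {A : Polynomial F // A.Monic ∧ A.natDegree < Q.natDegree},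
            χ.1 (Ideal.Quotient.mk (Ideal.span {Q}) A.1) *
              ((Fintype.card F : ℂ) ^ (A.1.natDegree : ℂ)) ^ (-s)) (1/2))
      = -∑ A : {A : Polynomial F // A.Monic ∧ A.natDegree < Q.natDegree},
          Tn A.1.natDegree := by
    rw [tsum_fintype]
    have h1 : ∀ χ : {χ : MulChar (Polynomial F ⧸ Ideal.span {Q}) ℂ // χ ≠ 1},
        iteratedDeriv k
          (fun s : ℂ =>
            ∑' A : {A : Polynomial F // A.Monic ∧ A.natDegree < Q.natDegree},
              χ.1 (Ideal.Quotient.mk (Ideal.span {Q}) A.1) *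
                ((Fintype.card F : ℂ) ^ (A.1.natDegree : ℂ)) ^ (-s)) (1/2)
        = ∑ A : {A : Polynomial F // A.Monic ∧ A.natDegree < Q.natDegree},
            χ.1 (Ideal.Quotient.mk (Ideal.span {Q}) A.1) * Tn A.1.natDegree :=
      fun χ => hIter χ.1
    rw [Finset.sum_congr rfl (fun χ _ => h1 χ)]
    rw [← Finset.sum_subtype (Finset.univ.erase (1 : MulChar (Polynomial F ⧸ Ideal.span {Q}) ℂ))
      (fun χ => by simp [Finset.mem_erase])
      (fun χ => ∑ A : {A : Polynomial F // A.Monic ∧ A.natDegree < Q.natDegree},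
        χ (Ideal.Quotient.mk (Ideal.span {Q}) A.1) * Tn A.1.natDegree)]
    rw [Finset.sum_comm]
    rw [← Finset.sum_neg_distrib]
    apply Finset.sum_congr rfl
    intro A _
    rw [← Finset.sum_mul, horth A]
    by_cases h : Ideal.Quotient.mk (Ideal.span {Q}) A.1 = 1
    · have hdeg : A.1.natDegree = 0 := by rw [(hA1 A).mp h]; exact Polynomial.natDegree_one
      have hT0 : Tn A.1.natDegree = 0 := by
        rw [hdeg, hTn]
        simp only [pow_zero, Complex.log_one, neg_zero]
        rw [zero_pow (by omega), zero_mul]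
      rw [hT0, mul_zero, neg_zero]
    · rw [if_neg h]; ring
  -- ## Step D : group by degree
  have hgroup : (∑ A : {A : Polynomial F // A.Monic ∧ A.natDegree < Q.natDegree},
        Tn A.1.natDegree)
      = ∑ n ∈ Finset.range Q.natDegree, (Fintype.card F ^ n : ℕ) • Tn n := by
    have h1 : ∑ A : {A : Polynomial F // A.Monic ∧ A.natDegree < Q.natDegree},
        Tn A.1.natDegree
        = ∑ p : (Σ n : Fin Q.natDegree, (Fin (n : ℕ) → F)), Tn (p.1 : ℕ) := by
      refine (Fintype.sum_equiv (polyEquiv Q.natDegree) _ _ ?_).symm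
      intro p
      exact congrArg Tn (natDegree_polyOf _ _).symm
    rw [h1, ← Finset.univ_sigma_univ, Finset.sum_sigma]
    rw [← Fin.sum_univ_eq_sum_range (fun n => (Fintype.card F ^ n : ℕ) • Tn n) Q.natDegree]
    apply Finset.sum_congr rfl
    intro n _
    simp only [Finset.sum_const, Finset.card_univ, Fintype.card_fun, Fintype.card_fin]
  -- ## Step E : reduction to real numbers
  have hq'0 : (0:ℝ) ≤ (Fintype.card F : ℝ) := by positivity
  have hq'2 : (2:ℝ) ≤ (Fintype.card F : ℝ) := by exact_mod_cast hq2
  have hx2 : Real.sqrt (Fintype.card F : ℝ) ^ 2 = (Fintype.card F : ℝ) := Real.sq_sqrt hq'0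
  have hx0 : 0 ≤ Real.sqrt (Fintype.card F : ℝ) := Real.sqrt_nonneg _
  have hxn0 : ∀ n : ℕ, Real.sqrt (Fintype.card F : ℝ) ^ n ≠ 0 := by
    intro n
    have : 0 < Real.sqrt (Fintype.card F : ℝ) := Real.sqrt_pos.mpr (by linarith)
    positivity
  have hsqn : ∀ n : ℕ, Real.sqrt ((Fintype.card F : ℝ) ^ n)
      = Real.sqrt (Fintype.card F : ℝ) ^ n := by
    intro n
    have h : ((Fintype.card F : ℝ)) ^ n = (Real.sqrt (Fintype.card F : ℝ) ^ n) ^ 2 := by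
      rw [← pow_mul, mul_comm n 2, pow_mul, hx2]
    rw [h, Real.sqrt_sq (by positivity)]
  have hq'n : ∀ n : ℕ, (Fintype.card F : ℝ) ^ n
      = Real.sqrt (Fintype.card F : ℝ) ^ n * Real.sqrt (Fintype.card F : ℝ) ^ n := by
    intro n
    have h : Real.sqrt (Fintype.card F : ℝ) ^ n * Real.sqrt (Fintype.card F : ℝ) ^ n
        = (Real.sqrt (Fintype.card F : ℝ) ^ n) ^ 2 := (sq _).symm
    rw [h, ← hsqn n, Real.sq_sqrt (by positivity)]
  have hTnr : ∀ n : ℕ, Tn n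
      = (((-((n : ℝ) * Real.log (Fintype.card F))) ^ k *
          (Real.sqrt (Fintype.card F : ℝ) ^ n)⁻¹ : ℝ) : ℂ) := by
    intro n
    have hb : ((Fintype.card F : ℂ) ^ n) = (((Fintype.card F : ℝ) ^ n : ℝ) : ℂ) := by
      push_cast; ring
    have hlog : Complex.log ((Fintype.card F : ℂ) ^ n)
        = (((n : ℝ) * Real.log (Fintype.card F) : ℝ) : ℂ) := by
      rw [hb, ← Complex.ofReal_log (by positivity), Real.log_pow]
    have hcpow : ((Fintype.card F : ℂ) ^ n) ^ (-(1/2) : ℂ)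
        = ((((Fintype.card F : ℝ) ^ n) ^ (-(1/2) : ℝ) : ℝ) : ℂ) := by
      rw [hb, show (-(1/2) : ℂ) = ((-(1/2) : ℝ) : ℂ) by norm_num,
        ← Complex.ofReal_cpow (by positivity)]
    have hrpow : (((Fintype.card F : ℝ) ^ n) ^ (-(1/2) : ℝ) : ℝ)
        = (Real.sqrt (Fintype.card F : ℝ) ^ n)⁻¹ := by
      rw [Real.rpow_neg (by positivity), ← Real.sqrt_eq_rpow, hsqn]
    rw [hTn]
    simp only []
    rw [hlog, hcpow, hrpow]
    push_cast
    ring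
  -- the real sum
  have hsum_real : (∑ n ∈ Finset.range Q.natDegree, (Fintype.card F ^ n : ℕ) • Tn n)
      = (((-(Real.log (Fintype.card F))) ^ k *
          ∑ n ∈ Finset.range Q.natDegree,
            (n : ℝ) ^ k * Real.sqrt (Fintype.card F : ℝ) ^ n : ℝ) : ℂ) := by
    rw [Complex.ofReal_mul, Complex.ofReal_sum, Finset.mul_sum]
    apply Finset.sum_congr rfl
    intro n _
    rw [hTnr n, nsmul_eq_mul]
    rw [show ((Fintype.card F ^ n : ℕ) : ℂ) = (((Fintype.card F : ℝ) ^ n : ℝ) : ℂ) by push_cast; ring]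
    rw [← Complex.ofReal_mul]
    congr 1
    have h1 : (-((n:ℝ) * Real.log (Fintype.card F))) ^ k
        = (-(Real.log (Fintype.card F))) ^ k * (n : ℝ) ^ k := by
      rw [show -((n:ℝ) * Real.log (Fintype.card F))
        = (-(Real.log (Fintype.card F))) * n by ring, mul_pow]
    rw [hq'n n, h1]
    field_simp [hxn0 n]
    push_cast; ring
  -- ## Step F : identify the whole expression as a real number
  have hφr : ((Fintype.card F ^ Q.natDegree - 1 : ℕ) : ℝ)
      = Real.sqrt (Fintype.card F : ℝ) ^ (2 * Q.natDegree) - 1 := by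
    have h1 : 1 ≤ Fintype.card F ^ Q.natDegree := Nat.one_le_pow _ _ (by omega)
    rw [Nat.cast_sub h1]
    rw [pow_mul, hx2]
    push_cast
    ring
  have hval : ((Nat.card (Polynomial F ⧸ Ideal.span {Q})ˣ : ℂ)⁻¹ *
        (∑' χ : {χ : MulChar (Polynomial F ⧸ Ideal.span {Q}) ℂ // χ ≠ 1},
          iteratedDeriv k
            (fun s : ℂ =>
              ∑' A : {A : Polynomial F // A.Monic ∧ A.natDegree < Q.natDegree},
                χ.1 (Ideal.Quotient.mk (Ideal.span {Q}) A.1) *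
                  ((Fintype.card F : ℂ) ^ (A.1.natDegree : ℂ)) ^ (-s))
            (1 / 2)) +
        ((-(Real.log (Fintype.card F)) : ℂ) ^ k /
              ((Real.sqrt (Fintype.card F) : ℂ) - 1)) *
          (Q.natDegree : ℂ) ^ k /
          (Real.sqrt ((Fintype.card F : ℝ) ^ Q.natDegree) : ℂ))
      = (((-(Real.log (Fintype.card F))) ^ k *
          ((Q.natDegree : ℝ) ^ k / ((Real.sqrt (Fintype.card F : ℝ) - 1) *
              Real.sqrt (Fintype.card F : ℝ) ^ Q.natDegree)
            - (∑ n ∈ Finset.range Q.natDegree,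
                (n : ℝ) ^ k * Real.sqrt (Fintype.card F : ℝ) ^ n) /
              (Real.sqrt (Fintype.card F : ℝ) ^ (2 * Q.natDegree) - 1)) : ℝ) : ℂ) := by
    rw [hχsum, hgroup, hsum_real, hφ, hsqn]
    rw [show ((Fintype.card F ^ Q.natDegree - 1 : ℕ) : ℂ)
      = (((Fintype.card F ^ Q.natDegree - 1 : ℕ) : ℝ) : ℂ) by push_cast; ring]
    rw [hφr]
    have hx1 : 1 < Real.sqrt (Fintype.card F : ℝ) := by nlinarith [hx2, hx0, hq'2]
    have hb1 : ((Real.sqrt (Fintype.card F : ℝ) : ℝ) : ℂ) - 1 ≠ 0 := by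
      rw [show ((Real.sqrt (Fintype.card F : ℝ) : ℝ) : ℂ) - 1
        = ((Real.sqrt (Fintype.card F : ℝ) - 1 : ℝ) : ℂ) by push_cast; ring]
      exact Complex.ofReal_ne_zero.mpr (by linarith)
    have hb2 : ((Real.sqrt (Fintype.card F : ℝ) : ℝ) : ℂ) ^ Q.natDegree ≠ 0 :=
      pow_ne_zero _ (Complex.ofReal_ne_zero.mpr (by linarith))
    have hb3 : ((Real.sqrt (Fintype.card F : ℝ) : ℝ) : ℂ) ^ (2 * Q.natDegree) - 1 ≠ 0 := by
      rw [show ((Real.sqrt (Fintype.card F : ℝ) : ℝ) : ℂ) ^ (2 * Q.natDegree) - 1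
        = ((Real.sqrt (Fintype.card F : ℝ) ^ (2 * Q.natDegree) - 1 : ℝ) : ℂ) by push_cast; ring]
      apply Complex.ofReal_ne_zero.mpr
      have h4 : (1:ℝ) < Real.sqrt (Fintype.card F : ℝ) ^ (2 * Q.natDegree) :=
        one_lt_pow₀ hx1 (by omega)
      linarith
    push_cast at hb1 hb2 hb3 ⊢
    field_simp
    ring
  rw [hval, Complex.norm_real, Real.norm_eq_abs]
  -- ## Step G : the real estimate
  have hx : Real.sqrt 2 ≤ Real.sqrt (Fintype.card F : ℝ) := Real.sqrt_le_sqrt hq'2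
  have hkey := key_real k hk (Real.sqrt (Fintype.card F : ℝ)) hx Q.natDegree hD1
  have hlog0 : 0 ≤ Real.log (Fintype.card F : ℝ) := Real.log_nonneg (by linarith)
  rw [abs_mul, abs_pow, abs_neg, abs_of_nonneg hlog0]
  rw [hsqn]
  have hbound := mul_le_mul_of_nonneg_left hkey (by positivity :
    (0:ℝ) ≤ Real.log (Fintype.card F : ℝ) ^ k)
  calc Real.log (Fintype.card F : ℝ) ^ k *
        |(Q.natDegree : ℝ) ^ k / ((Real.sqrt (Fintype.card F : ℝ) - 1) *
            Real.sqrt (Fintype.card F : ℝ) ^ Q.natDegree)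
          - (∑ n ∈ Finset.range Q.natDegree,
              (n : ℝ) ^ k * Real.sqrt (Fintype.card F : ℝ) ^ n) /
            (Real.sqrt (Fintype.card F : ℝ) ^ (2 * Q.natDegree) - 1)|
      ≤ Real.log (Fintype.card F : ℝ) ^ k *
          ((16 + 20 * k) * (Q.natDegree : ℝ) ^ (k-1) /
            Real.sqrt (Fintype.card F : ℝ) ^ Q.natDegree) := hbound
    _ = (16 + 20 * (k:ℝ)) * Real.log (Fintype.card F : ℝ) ^ k * (Q.natDegree : ℝ) ^ (k-1) /
          Real.sqrt (Fintype.card F : ℝ) ^ Q.natDegree := by ring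
end

section
/- Let m be an integer with m >= 3. For all real x with 0 <= x <= 2 m^{1/3}, one has (1 - x/m)^m >= e^{-x} * e^{-4/(m^{1/3} - 2 m^{-1/3})}. -/
theorem stmt_12 (m : ℕ) (hm : 3 ≤ m) (x : ℝ) (hx : 0 ≤ x)
    (hx' : x ≤ 2 * (m : ℝ) ^ ((1 : ℝ) / 3)) :
    (1 - x / m) ^ m ≥
      Real.exp (-x) *
        Real.exp (-4 / ((m : ℝ) ^ ((1 : ℝ) / 3) - 2 * (m : ℝ) ^ (-(1 : ℝ) / 3))) := by
  set c : ℝ := (m : ℝ) ^ ((1 : ℝ) / 3) with hc_def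
  have hm3 : (3 : ℝ) ≤ (m : ℝ) := by exact_mod_cast hm
  have hmpos : (0 : ℝ) < m := by linarith
  have hcpos : 0 < c := Real.rpow_pos_of_pos hmpos _
  have hc3 : c ^ 3 = (m : ℝ) := by
    rw [hc_def, ← Real.rpow_natCast ((m : ℝ) ^ ((1 : ℝ) / 3)) 3,
      ← Real.rpow_mul hmpos.le]
    norm_num
  have hc2 : (2 : ℝ) < c ^ 2 := by
    have h1 : (c ^ 2) ^ 3 = ((m : ℝ)) ^ 2 := by rw [← hc3]; ring
    have h8 : (2 : ℝ) ^ 3 < (c ^ 2) ^ 3 := by rw [h1]; nlinarith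
    exact lt_of_pow_lt_pow_left₀ 3 (sq_nonneg c) h8
  have hcneg : (m : ℝ) ^ (-(1 : ℝ) / 3) = c⁻¹ := by
    rw [neg_div, Real.rpow_neg hmpos.le, hc_def]
  have hxm : x < (m : ℝ) := by
    have h2c : 2 * c < (m : ℝ) := by nlinarith
    linarith
  have hmx : 0 < (m : ℝ) - x := by linarith
  have hd : c - 2 * c⁻¹ = (c ^ 2 - 2) / c := by field_simp
  have hc2' : (0 : ℝ) < c ^ 2 - 2 := by linarith
  -- key single-factor inequality: exp(-(x/(m-x))) ≤ 1 - x/m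
  have h2 : 1 / (1 - x / m) ≤ Real.exp (x / ((m : ℝ) - x)) := by
    have heq : 1 / (1 - x / m) = x / ((m : ℝ) - x) + 1 := by
      field_simp
      ring
    rw [heq]
    exact Real.add_one_le_exp _
  have hposfrac : 0 < 1 / (1 - x / m) := by
    have : 0 < 1 - x / m := by
      rw [sub_pos, div_lt_one hmpos]; exact hxm
    positivity
  have key : Real.exp (-(x / ((m : ℝ) - x))) ≤ 1 - x / m := by
    rw [Real.exp_neg]
    calc (Real.exp (x / ((m : ℝ) - x)))⁻¹ ≤ (1 / (1 - x / m))⁻¹ :=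
          inv_anti₀ hposfrac h2
      _ = 1 - x / m := by rw [one_div, inv_inv]
  have hpow : Real.exp (-(x / ((m : ℝ) - x))) ^ m ≤ (1 - x / m) ^ m :=
    pow_le_pow_left₀ (Real.exp_nonneg _) key m
  have hexp_pow : Real.exp (-(x / ((m : ℝ) - x))) ^ m
      = Real.exp ((m : ℝ) * (-(x / ((m : ℝ) - x)))) :=
    (Real.exp_nat_mul _ m).symm
  -- final arithmetic comparison
  have hpoly : (m : ℝ) * x * (c ^ 2 - 2) ≤ (x * (c ^ 2 - 2) + 4 * c) * ((m : ℝ) - x) := by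
    rw [← hc3]
    nlinarith [mul_nonneg (sub_nonneg.mpr hx') hx,
      mul_nonneg (mul_nonneg (sub_nonneg.mpr hx') hx) hc2'.le,
      mul_nonneg (mul_nonneg (sub_nonneg.mpr hx') hcpos.le) hc2'.le,
      mul_pos hcpos hc2', sq_nonneg (2 * c - x), sq_nonneg x, hcpos.le]
  have hfrac : (m : ℝ) * x / ((m : ℝ) - x) ≤ x + 4 / (c - 2 * c⁻¹) := by
    rw [hd]
    have h4 : x + 4 / ((c ^ 2 - 2) / c) = (x * (c ^ 2 - 2) + 4 * c) / (c ^ 2 - 2) := by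
      field_simp
    rw [h4, div_le_div_iff₀ hmx hc2']
    linarith [hpoly]
  have hexp_le : Real.exp (-x) * Real.exp (-4 / (c - 2 * c⁻¹))
      ≤ Real.exp ((m : ℝ) * (-(x / ((m : ℝ) - x)))) := by
    rw [← Real.exp_add]
    apply Real.exp_le_exp.mpr
    have e1 : (m : ℝ) * (-(x / ((m : ℝ) - x))) = -((m : ℝ) * x / ((m : ℝ) - x)) := by
      ring
    rw [e1]
    have e2 : -x + -4 / (c - 2 * c⁻¹) = -(x + 4 / (c - 2 * c⁻¹)) := by ring
    rw [e2]
    exact neg_le_neg hfrac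
  rw [hcneg]
  calc (1 - x / m) ^ m ≥ Real.exp (-(x / ((m : ℝ) - x))) ^ m := hpow
    _ = Real.exp ((m : ℝ) * (-(x / ((m : ℝ) - x)))) := hexp_pow
    _ ≥ Real.exp (-x) * Real.exp (-4 / (c - 2 * c⁻¹)) := hexp_le
end

section
/- As m -> infinity over positive integers, m^4 times the integral over the region {a1, a2, a3, a4 >= 0, 2a1 + a3 + a4 < 1, 2a2 + a3 + a4 < 1} of (1 - a1 - a3)^m (1 - a1 - a4)^m (1 - a2 - a3)^m (1 - a2 - a4)^m with respect to da1 da2 da3 da4 tends to 1/16. -/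
open MeasureTheory Set Filter Real Topology

noncomputable section Stmt13Aux

namespace Stmt13Aux

/-- The region of integration. -/
def S : Set (Fin 4 → ℝ) :=
  {a : Fin 4 → ℝ | (∀ i, 0 ≤ a i) ∧ 2 * a 0 + a 2 + a 3 < 1 ∧ 2 * a 1 + a 2 + a 3 < 1}

/-- The integrand. -/
def f (m : ℕ) (a : Fin 4 → ℝ) : ℝ :=
  (1 - a 0 - a 2) ^ m * (1 - a 0 - a 3) ^ m * (1 - a 1 - a 2) ^ m * (1 - a 1 - a 3) ^ m

lemma measS : MeasurableSet S := by
  have h1 : MeasurableSet {a : Fin 4 → ℝ | ∀ i, 0 ≤ a i} := by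
    have : {a : Fin 4 → ℝ | ∀ i, 0 ≤ a i} = ⋂ i, {a : Fin 4 → ℝ | 0 ≤ a i} := by
      ext a; simp
    rw [this]
    exact MeasurableSet.iInter fun i =>
      measurableSet_le measurable_const (measurable_pi_apply i)
  have h2 : MeasurableSet {a : Fin 4 → ℝ | 2 * a 0 + a 2 + a 3 < 1} :=
    measurableSet_lt (by fun_prop) measurable_const
  have h3 : MeasurableSet {a : Fin 4 → ℝ | 2 * a 1 + a 2 + a 3 < 1} :=
    measurableSet_lt (by fun_prop) measurable_const
  exact (h1.inter (h2.inter h3))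

lemma meas_f (m : ℕ) : Measurable (f m) := by
  unfold f; fun_prop

/-- One–dimensional profile of the dominating function. -/
def h (t : ℝ) : ℝ := (Ici (0:ℝ)).indicator (fun t => Real.exp (-2 * t)) t

/-- The dominating function / limit function. -/
def L (x : Fin 4 → ℝ) : ℝ := ∏ i, h (x i)

lemma h_nonneg (t : ℝ) : 0 ≤ h t := by
  unfold h
  exact Set.indicator_nonneg (fun t _ => (Real.exp_pos _).le) t

lemma L_nonneg (x : Fin 4 → ℝ) : 0 ≤ L x :=
  Finset.prod_nonneg fun i _ => h_nonneg _

lemma h_integrable : Integrable h := by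
  unfold h
  rw [integrable_indicator_iff measurableSet_Ici]
  rw [integrableOn_Ici_iff_integrableOn_Ioi]
  simpa using exp_neg_integrableOn_Ioi 0 (by norm_num : (0:ℝ) < 2)

lemma h_integral : ∫ t, h t = 1 / 2 := by
  unfold h
  rw [integral_indicator measurableSet_Ici, integral_Ici_eq_integral_Ioi]
  have : ∀ x : ℝ, Real.exp (-2 * x) = (fun y => Real.exp (-y)) (2 * x) := by
    intro x; simp [neg_mul]
  calc ∫ x in Ioi (0:ℝ), Real.exp (-2 * x)
      = ∫ x in Ioi (0:ℝ), (fun y => Real.exp (-y)) (2 * x) := by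
        refine setIntegral_congr_fun measurableSet_Ioi fun x _ => this x
    _ = (2:ℝ)⁻¹ • ∫ y in Ioi (2 * (0:ℝ)), Real.exp (-y) :=
        integral_comp_mul_left_Ioi (fun y => Real.exp (-y)) 0 (by norm_num)
    _ = 1 / 2 := by
        rw [mul_zero, integral_exp_neg_Ioi]
        norm_num

lemma L_integrable : Integrable L :=
  Integrable.fintype_prod (fun _ => h_integrable)

lemma L_integral : ∫ x, L x = 1 / 16 := by
  unfold L
  rw [integral_fintype_prod_volume_eq_prod (fun _ => h)]
  rw [Finset.prod_const, h_integral]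
  norm_num

lemma rank4 : Module.finrank ℝ (Fin 4 → ℝ) = 4 := Module.finrank_fin_fun ℝ

/-- Key elementary estimate. -/
lemma pow_le_exp_aux {n : ℕ} (hn : 0 < n) {s : ℝ} (h : 0 ≤ 1 - (n:ℝ)⁻¹ * s) :
    (1 - (n:ℝ)⁻¹ * s) ^ n ≤ Real.exp (-s) := by
  have hne : (n:ℝ) ≠ 0 := Nat.cast_ne_zero.2 hn.ne'
  have h1 : (1 - (n:ℝ)⁻¹ * s) ≤ Real.exp (-((n:ℝ)⁻¹ * s)) := by
    have := Real.add_one_le_exp (-((n:ℝ)⁻¹ * s))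
    linarith
  calc (1 - (n:ℝ)⁻¹ * s) ^ n ≤ Real.exp (-((n:ℝ)⁻¹ * s)) ^ n :=
        pow_le_pow_left₀ h h1 n
    _ = Real.exp (-s) := by
        rw [← Real.exp_nat_mul]
        congr 1
        field_simp

/-- The rescaled integrand. -/
def H (m : ℕ) (x : Fin 4 → ℝ) : ℝ := S.indicator (f m) (((m:ℕ):ℝ)⁻¹ • x)

lemma H_aesm (m : ℕ) : AEStronglyMeasurable (H m) volume := by
  have : Measurable (H m) :=
    ((meas_f m).indicator measS).comp (measurable_id.const_smul (((m:ℕ):ℝ)⁻¹))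
  exact this.aestronglyMeasurable

lemma H_bound {n : ℕ} (hn : 0 < n) (x : Fin 4 → ℝ) : ‖H n x‖ ≤ L x := by
  have hne : ((n:ℕ):ℝ) ≠ 0 := Nat.cast_ne_zero.2 hn.ne'
  set c : ℝ := ((n:ℕ):ℝ)⁻¹ with hc
  have hcpos : 0 < c := by positivity
  have hsm : ∀ i, (c • x) i = c * x i := fun i => rfl
  by_cases hxS : (c • x) ∈ S
  · have hxS' := hxS
    obtain ⟨hpos, hA, hB⟩ := hxS'
    simp only [hsm] at hpos hA hB
    have hx : ∀ i, 0 ≤ x i := fun i => nonneg_of_mul_nonneg_right (hpos i) hcpos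
    -- rewrite H
    unfold H
    rw [Set.indicator_of_mem hxS]
    have e1 : f n (c • x) =
        (1 - c * (x 0 + x 2)) ^ n * (1 - c * (x 0 + x 3)) ^ n *
          (1 - c * (x 1 + x 2)) ^ n * (1 - c * (x 1 + x 3)) ^ n := by
      simp only [f, hsm]; ring_nf
    have k0 : 0 ≤ c * x 0 := hpos 0
    have k1 : 0 ≤ c * x 1 := hpos 1
    have k2 : 0 ≤ c * x 2 := hpos 2
    have k3 : 0 ≤ c * x 3 := hpos 3
    have g1 : 0 ≤ 1 - c * (x 0 + x 2) := by rw [mul_add]; nlinarith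
    have g2 : 0 ≤ 1 - c * (x 0 + x 3) := by rw [mul_add]; nlinarith
    have g3 : 0 ≤ 1 - c * (x 1 + x 2) := by rw [mul_add]; nlinarith
    have g4 : 0 ≤ 1 - c * (x 1 + x 3) := by rw [mul_add]; nlinarith
    have b1 := pow_le_exp_aux hn g1
    have b2 := pow_le_exp_aux hn g2
    have b3 := pow_le_exp_aux hn g3
    have b4 := pow_le_exp_aux hn g4
    have hLx : L x = Real.exp (-2 * x 0) * Real.exp (-2 * x 1) *
        Real.exp (-2 * x 2) * Real.exp (-2 * x 3) := by
      unfold L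
      rw [Fin.prod_univ_four]
      simp [h, Set.indicator_of_mem, Set.mem_Ici.2 (hx 0), Set.mem_Ici.2 (hx 1),
        Set.mem_Ici.2 (hx 2), Set.mem_Ici.2 (hx 3)]
    rw [e1, hLx]
    have hprod :
        (1 - c * (x 0 + x 2)) ^ n * (1 - c * (x 0 + x 3)) ^ n *
          (1 - c * (x 1 + x 2)) ^ n * (1 - c * (x 1 + x 3)) ^ n ≤
        Real.exp (-(x 0 + x 2)) * Real.exp (-(x 0 + x 3)) *
          Real.exp (-(x 1 + x 2)) * Real.exp (-(x 1 + x 3)) := by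
      gcongr <;> positivity
    have hnn : 0 ≤ (1 - c * (x 0 + x 2)) ^ n * (1 - c * (x 0 + x 3)) ^ n *
          (1 - c * (x 1 + x 2)) ^ n * (1 - c * (x 1 + x 3)) ^ n := by positivity
    rw [Real.norm_eq_abs, abs_of_nonneg hnn]
    calc _ ≤ Real.exp (-(x 0 + x 2)) * Real.exp (-(x 0 + x 3)) *
          Real.exp (-(x 1 + x 2)) * Real.exp (-(x 1 + x 3)) := hprod
      _ = Real.exp (-2 * x 0) * Real.exp (-2 * x 1) *
          Real.exp (-2 * x 2) * Real.exp (-2 * x 3) := by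
        rw [← Real.exp_add, ← Real.exp_add, ← Real.exp_add,
          ← Real.exp_add, ← Real.exp_add, ← Real.exp_add]
        ring_nf
  · rw [H, Set.indicator_of_notMem hxS]
    simpa using L_nonneg x

lemma H_eval {n : ℕ} (hn : 0 < n) {x : Fin 4 → ℝ} (h1 : ∀ i, 0 ≤ x i)
    (h2 : 2 * x 0 + x 2 + x 3 < (n:ℝ)) (h3 : 2 * x 1 + x 2 + x 3 < (n:ℝ)) :
    H n x = (1 + -(x 0 + x 2) / n) ^ n * (1 + -(x 0 + x 3) / n) ^ n *
      (1 + -(x 1 + x 2) / n) ^ n * (1 + -(x 1 + x 3) / n) ^ n := by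
  have hnpos : (0:ℝ) < (n:ℝ) := by exact_mod_cast hn
  have hne : (n:ℝ) ≠ 0 := hnpos.ne'
  have hsm : ∀ i, (((n:ℝ))⁻¹ • x) i = ((n:ℝ))⁻¹ * x i := fun i => rfl
  have key : ∀ u v w : ℝ, 2 * u + v + w < (n:ℝ) →
      2 * ((n:ℝ)⁻¹ * u) + (n:ℝ)⁻¹ * v + (n:ℝ)⁻¹ * w < 1 := by
    intro u v w hw
    have e : 2 * ((n:ℝ)⁻¹ * u) + (n:ℝ)⁻¹ * v + (n:ℝ)⁻¹ * w = (2 * u + v + w) / (n:ℝ) := by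
      field_simp
    rw [e]
    exact (div_lt_one hnpos).2 hw
  have hmem : (((n:ℝ))⁻¹ • x) ∈ S := by
    refine ⟨fun i => ?_, ?_, ?_⟩
    · rw [hsm]; exact mul_nonneg (by positivity) (h1 i)
    · rw [hsm 0, hsm 2, hsm 3]; exact key _ _ _ h2
    · rw [hsm 1, hsm 2, hsm 3]; exact key _ _ _ h3
  unfold H
  rw [Set.indicator_of_mem hmem]
  unfold f
  simp only [Pi.smul_apply, smul_eq_mul]
  have e : ∀ u v : ℝ, (1:ℝ) - (n:ℝ)⁻¹ * u - (n:ℝ)⁻¹ * v = 1 + -(u + v) / (n:ℝ) := by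
    intro u v; ring
  rw [e, e, e, e]

lemma H_tendsto : ∀ᵐ x : Fin 4 → ℝ,
    Tendsto (fun m : ℕ => H (m + 1) x) atTop (𝓝 (L x)) := by
  have hae : ∀ᵐ x : Fin 4 → ℝ, ∀ i, x i ≠ 0 := by
    rw [MeasureTheory.ae_all_iff]
    intro i
    exact Measure.ae_eval_ne _ i 0
  filter_upwards [hae] with x hx
  by_cases hpos : ∀ i, 0 < x i
  · -- positive orthant: eventually in S, and factors converge to exponentials
    have hLx : L x = Real.exp (-(x 0 + x 2)) * Real.exp (-(x 0 + x 3)) *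
        Real.exp (-(x 1 + x 2)) * Real.exp (-(x 1 + x 3)) := by
      unfold L
      rw [Fin.prod_univ_four]
      simp only [h, Set.indicator_of_mem (Set.mem_Ici.2 (hpos 0).le),
        Set.indicator_of_mem (Set.mem_Ici.2 (hpos 1).le),
        Set.indicator_of_mem (Set.mem_Ici.2 (hpos 2).le),
        Set.indicator_of_mem (Set.mem_Ici.2 (hpos 3).le)]
      rw [← Real.exp_add, ← Real.exp_add, ← Real.exp_add,
        ← Real.exp_add, ← Real.exp_add, ← Real.exp_add]
      ring_nf
    rw [hLx]
    have key : Tendsto (fun n : ℕ =>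
        (1 + (-(x 0 + x 2)) / n) ^ n * (1 + (-(x 0 + x 3)) / n) ^ n *
          (1 + (-(x 1 + x 2)) / n) ^ n * (1 + (-(x 1 + x 3)) / n) ^ n) atTop
        (𝓝 (Real.exp (-(x 0 + x 2)) * Real.exp (-(x 0 + x 3)) *
          Real.exp (-(x 1 + x 2)) * Real.exp (-(x 1 + x 3)))) := by
      exact (((Real.tendsto_one_add_div_pow_exp (-(x 0 + x 2))).mul
        (Real.tendsto_one_add_div_pow_exp (-(x 0 + x 3)))).mul
        (Real.tendsto_one_add_div_pow_exp (-(x 1 + x 2)))).mul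
        (Real.tendsto_one_add_div_pow_exp (-(x 1 + x 3)))
    have key' := key.comp (tendsto_add_atTop_nat 1)
    refine key'.congr' ?_
    have hev : ∀ᶠ m : ℕ in atTop,
        (2 * x 0 + x 2 + x 3 < (m:ℝ) + 1) ∧ (2 * x 1 + x 2 + x 3 < (m:ℝ) + 1) := by
      have t1 : Tendsto (fun m : ℕ => (m:ℝ) + 1) atTop atTop :=
        tendsto_natCast_atTop_atTop.atTop_add tendsto_const_nhds
      exact (t1.eventually_gt_atTop _).and (t1.eventually_gt_atTop _)
    filter_upwards [hev] with m hm
    obtain ⟨hm1, hm2⟩ := hm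
    have hc : ((m + 1 : ℕ) : ℝ) = (m : ℝ) + 1 := by push_cast; ring
    simp only [Function.comp_apply]
    exact (H_eval (Nat.succ_pos m) (fun i => (hpos i).le)
      (by rw [hc]; exact hm1) (by rw [hc]; exact hm2)).symm
  · -- some coordinate is negative: both sides vanish
    push_neg at hpos
    obtain ⟨i, hi⟩ := hpos
    have hineg : x i < 0 := lt_of_le_of_ne hi (hx i)
    have hL : L x = 0 := by
      unfold L
      refine Finset.prod_eq_zero (Finset.mem_univ i) ?_
      unfold h
      rw [Set.indicator_of_notMem]
      simpa using hineg
    rw [hL]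
    have hzero : ∀ m : ℕ, H (m + 1) x = 0 := by
      intro m
      unfold H
      rw [Set.indicator_of_notMem]
      intro hmem
      have h0 := hmem.1 i
      have hsm : ((((m+1:ℕ)):ℝ)⁻¹ • x) i = (((m+1:ℕ)):ℝ)⁻¹ * x i := rfl
      rw [hsm] at h0
      have hp : (0:ℝ) < (((m+1:ℕ)):ℝ)⁻¹ := by positivity
      nlinarith
    have : (fun m : ℕ => H (m + 1) x) = fun _ => (0:ℝ) := funext hzero
    rw [this]
    exact tendsto_const_nhds

lemma eq_integral {m : ℕ} (hm : 1 ≤ m) :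
    (m : ℝ) ^ 4 * ∫ a in S, f m a = ∫ x, H m x := by
  have h0 : (0:ℝ) ≤ (m:ℝ) := by positivity
  have := MeasureTheory.Measure.integral_comp_inv_smul_of_nonneg (volume : Measure (Fin 4 → ℝ))
    (S.indicator (f m)) h0
  unfold H
  simp only [rank4] at this
  rw [show (fun x : Fin 4 → ℝ => S.indicator (f m) (((m:ℕ):ℝ)⁻¹ • x))
      = fun x => S.indicator (f m) (((m:ℝ))⁻¹ • x) from rfl]
  rw [this, integral_indicator measS]
  simp [smul_eq_mul]

end Stmt13Aux

end Stmt13Aux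

open Stmt13Aux in
theorem stmt_13 :
    Filter.Tendsto
      (fun m : ℕ => (m : ℝ) ^ 4 *
        ∫ a in {a : Fin 4 → ℝ | (∀ i, 0 ≤ a i) ∧
            2 * a 0 + a 2 + a 3 < 1 ∧ 2 * a 1 + a 2 + a 3 < 1},
          (1 - a 0 - a 2) ^ m * (1 - a 0 - a 3) ^ m *
            (1 - a 1 - a 2) ^ m * (1 - a 1 - a 3) ^ m)
      Filter.atTop (nhds (1 / 16)) := by
  have hDCT : Tendsto (fun m : ℕ => ∫ x, H (m + 1) x) atTop (𝓝 (1 / 16)) := by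
    rw [← L_integral]
    refine MeasureTheory.tendsto_integral_of_dominated_convergence L
      (fun m => H_aesm (m + 1)) L_integrable ?_ H_tendsto
    intro m
    exact Filter.Eventually.of_forall fun x => H_bound (Nat.succ_pos m) x
  have hDCT' : Tendsto (fun m : ℕ => ∫ x, H m x) atTop (𝓝 (1 / 16)) :=
    (Filter.tendsto_add_atTop_iff_nat 1).mp hDCT
  refine hDCT'.congr' ?_
  filter_upwards [Filter.eventually_ge_atTop 1] with m hm
  exact (eq_integral hm).symm
end

section
/- Define D_m for a nonnegative integer m as the integral over {a1,a2,a3,a4 >= 0, 2a1+a3+a4 < 1, 2a2+a3+a4 < 1} of ((a1+a3)^m (a1+a4)^m + (1-a1-a3)^m (1-a1-a4)^m) * ((a2+a3)^m (a2+a4)^m + (1-a2-a3)^m (1-a2-a4)^m) da1 da2 da3 da4. Then D_m ~ 1/(16 m^4) as m -> infinity, i.e., 16 m^4 D_m -> 1. -/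
open MeasureTheory Set Filter Real

set_option maxHeartbeats 2000000
noncomputable section

def poly (m : ℕ) (u v : ℝ) : ℝ → ℝ := fun x => (x+u)^m * (x+v)^m + (1-x-u)^m * (1-x-v)^m
def Jf (m : ℕ) (u v : ℝ) : ℝ := ∫ x in Set.Ioo 0 ((1 - u - v)/2), poly m u v x
def hfun (m : ℕ) (u v : ℝ) : ℝ → ℝ := (Set.Ico 0 ((1-u-v)/2)).indicator (poly m u v)
def SS : Set (Fin 4 → ℝ) :=
  {a | (∀ i, 0 ≤ a i) ∧ 2 * a 0 + a 2 + a 3 < 1 ∧ 2 * a 1 + a 2 + a 3 < 1}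
def G4 (m : ℕ) (a : Fin 4 → ℝ) : ℝ := poly m (a 2) (a 3) (a 0) * poly m (a 2) (a 3) (a 1)
def Ff (m : ℕ) (z : (ℝ × ℝ) × (Fin 2 → ℝ)) : ℝ :=
  (if 0 ≤ z.1.1 ∧ 0 ≤ z.1.2 then 1 else 0) *
    (hfun m z.1.1 z.1.2 (z.2 0) * hfun m z.1.1 z.1.2 (z.2 1))
def Psi (m : ℕ) (p : ℝ × ℝ) : ℝ :=
  (if 0 ≤ p.1 ∧ 0 ≤ p.2 then 1 else 0) * (Jf m p.1 p.2)^2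
def E1 : (Fin 4 → ℝ) ≃ᵐ ℝ × (Fin 3 → ℝ) := MeasurableEquiv.piFinSuccAbove (fun _ : Fin 4 => ℝ) 2
def E2 : (Fin 3 → ℝ) ≃ᵐ ℝ × (Fin 2 → ℝ) := MeasurableEquiv.piFinSuccAbove (fun _ : Fin 3 => ℝ) 2
def EE : (Fin 4 → ℝ) ≃ᵐ (ℝ × ℝ) × (Fin 2 → ℝ) :=
  (E1.trans ((MeasurableEquiv.refl ℝ).prodCongr E2)).trans MeasurableEquiv.prodAssoc.symm
def cseq (m : ℕ) : ℝ := (m:ℝ) ^ (-(3/5) : ℝ)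
def UBs : ℕ → ℝ := fun m =>
  (4 * (1 - (1/2:ℝ)^(4*m+3))) / ((2*(m:ℝ)+1)^2 * ((4*(m:ℝ)+3) * (4*(m:ℝ)+4)))
def LBs : ℕ → ℝ := fun m =>
  (1 - 4*(m:ℝ)*(cseq m)^2)^2 *
    ((4 / ((4*(m:ℝ)+3) * (4*(m:ℝ)+4))) *
      (1 - 2*(1-cseq m/2)^(4*m+4) + (1-cseq m)^(4*m+4))
      - 2*(1/2:ℝ)^(2*m+1)*(cseq m)^2) / (2*(m:ℝ)+1)^2

lemma LL (k : ℕ) (c r a b : ℝ) (hr : r ≠ 0) :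
    ∫ x in a..b, (c + r*x)^k =
      ((c + r*b)^(k+1) - (c + r*a)^(k+1)) / (r*((k:ℝ)+1)) := by
  have h : ∀ x : ℝ, HasDerivAt (fun y => (c + r*y)^(k+1) / (r*((k:ℝ)+1))) ((c + r*x)^k) x := by
    intro x
    have h1 : HasDerivAt (fun y : ℝ => c + r*y) r x := by
      simpa using ((hasDerivAt_id x).const_mul r).const_add c
    have h2 := (h1.pow (k+1)).div_const (r*((k:ℝ)+1))
    refine h2.congr_deriv ?_
    have hk : ((k:ℝ)+1) ≠ 0 := by positivity
    push_cast
    field_simp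
  rw [intervalIntegral.integral_eq_sub_of_hasDerivAt (fun x _ => h x)
    (((continuous_const.add (continuous_const.mul continuous_id)).pow k).intervalIntegrable _ _)]
  ring

lemma Jf_nonneg (m : ℕ) {u v : ℝ} (hu : 0 ≤ u) (hv : 0 ≤ v) : 0 ≤ Jf m u v := by
  unfold Jf poly
  apply setIntegral_nonneg measurableSet_Ioo
  intro x hx
  obtain ⟨hx0, hx1⟩ := hx
  have h1 : 0 ≤ x + u := by linarith
  have h2 : 0 ≤ x + v := by linarith
  have h3 : 0 ≤ 1 - x - u := by nlinarith
  have h4 : 0 ≤ 1 - x - v := by nlinarith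
  positivity

lemma IooInt (f : ℝ → ℝ) {a b : ℝ} (h : a ≤ b) : ∫ x in Ioo a b, f x = ∫ x in a..b, f x := by
  rw [intervalIntegral.integral_of_le h, integral_Ioc_eq_integral_Ioo]

lemma L2 (k : ℕ) (c a b : ℝ) :
    ∫ x in a..b, (c + x)^k = ((c+b)^(k+1) - (c+a)^(k+1))/((k:ℝ)+1) := by
  have h := LL k c 1 a b one_ne_zero
  simpa using h

lemma L3 (k : ℕ) (c a b : ℝ) :
    ∫ x in a..b, (c - x)^k = ((c-a)^(k+1) - (c-b)^(k+1))/((k:ℝ)+1) := by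
  have h := LL k c (-1) a b (by norm_num)
  have e : ∀ x : ℝ, (c + (-1)*x)^k = (c - x)^k := fun x => by ring_nf
  have e' : ∀ x : ℝ, (c + (-1)*x)^(k+1) = (c - x)^(k+1) := fun x => by ring_nf
  simp_rw [e, e'] at h
  rw [h]
  have hk : ((k:ℝ)+1) ≠ 0 := by positivity
  have hk2 : (-1 - (k:ℝ)) ≠ 0 := by
    have := Nat.cast_nonneg (α:=ℝ) k; intro hc; linarith [hc]
  generalize (c - a)^(k+1) = A
  generalize (c - b)^(k+1) = B
  rw [neg_one_mul, div_neg, ← neg_div, neg_sub]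

lemma L4 (k : ℕ) (c a b : ℝ) :
    ∫ x in a..b, (c - x/2)^k = 2*((c-a/2)^(k+1) - (c-b/2)^(k+1))/((k:ℝ)+1) := by
  have h := LL k c (-1/2) a b (by norm_num)
  have e : ∀ x : ℝ, (c + (-1/2)*x)^k = (c - x/2)^k := fun x => by ring_nf
  have e' : ∀ x : ℝ, (c + (-1/2)*x)^(k+1) = (c - x/2)^(k+1) := fun x => by ring_nf
  simp_rw [e, e'] at h
  rw [h]
  have hk : ((k:ℝ)+1) ≠ 0 := by positivity
  have hk2 : (-1 - (k:ℝ)) ≠ 0 := by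
    have := Nat.cast_nonneg (α:=ℝ) k; intro hc; linarith [hc]
  generalize (c - a/2)^(k+1) = A
  generalize (c - b/2)^(k+1) = B
  rw [show (-1/2*((k:ℝ)+1)) = -(((k:ℝ)+1)/2) from by ring, div_neg, ← neg_div, neg_sub,
    div_div_eq_mul_div]
  ring

lemma contPoly (m : ℕ) (u v : ℝ) :
    Continuous (fun x : ℝ => (x+u)^m * (x+v)^m + (1-x-u)^m * (1-x-v)^m) := by
  fun_prop

lemma Jf_le (m : ℕ) {u v : ℝ} (hu : 0 < u) (hu1 : u < 1) (hv : 0 < v) (hv1 : v < 1) :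
    Jf m u v ≤ (1 - (u+v)/2)^(2*m+1) / (2*(m:ℝ)+1) := by
  have hs : (0:ℝ) ≤ 1 - (u+v)/2 := by linarith
  rcases le_or_gt ((1 - u - v)/2) 0 with h | h
  · have h0 : Jf m u v = 0 := by
      unfold Jf poly
      rw [Set.Ioo_eq_empty (by linarith), setIntegral_empty]
    rw [h0]
    positivity
  · set e := (1-u-v)/2 with he
    set s := (u+v)/2 with hs'
    have key : Jf m u v ≤ ∫ x in Ioo 0 e, ((x+s)^(2*m) + (1-x-s)^(2*m)) := by
      unfold Jf poly
      apply setIntegral_mono_on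
      · exact ((contPoly m u v).integrableOn_Ioc).mono_set Set.Ioo_subset_Ioc_self
      · exact (((by fun_prop : Continuous fun x:ℝ => (x+s)^(2*m) + (1-x-s)^(2*m))).integrableOn_Ioc).mono_set Set.Ioo_subset_Ioc_self
      · exact measurableSet_Ioo
      · intro x hx
        obtain ⟨hx0, hx1⟩ := hx
        have h1 : 0 ≤ x + u := by linarith
        have h2 : 0 ≤ x + v := by linarith
        have h3 : 0 ≤ 1 - x - u := by nlinarith
        have h4 : 0 ≤ 1 - x - v := by nlinarith
        have e1 : (x+u)^m * (x+v)^m ≤ (x+s)^(2*m) := by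
          rw [← mul_pow, pow_mul]
          exact pow_le_pow_left₀ (mul_nonneg h1 h2) (by nlinarith [sq_nonneg (u-v)]) m
        have e2 : (1-x-u)^m * (1-x-v)^m ≤ (1-x-s)^(2*m) := by
          rw [← mul_pow, pow_mul]
          exact pow_le_pow_left₀ (mul_nonneg h3 h4) (by nlinarith [sq_nonneg (u-v)]) m
        linarith
    have comp : ∫ x in Ioo 0 e, ((x+s)^(2*m) + (1-x-s)^(2*m))
        = ((1-s)^(2*m+1) - s^(2*m+1)) / (2*(m:ℝ)+1) := by
      rw [IooInt _ (le_of_lt h)]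
      rw [intervalIntegral.integral_add
        (((by fun_prop : Continuous fun x:ℝ => (x+s)^(2*m))).intervalIntegrable _ _)
        (((by fun_prop : Continuous fun x:ℝ => (1-x-s)^(2*m))).intervalIntegrable _ _)]
      have e1 : ∀ x : ℝ, (x+s)^(2*m) = (s+x)^(2*m) := fun x => by ring_nf
      have e2 : ∀ x : ℝ, (1-x-s)^(2*m) = ((1-s)-x)^(2*m) := fun x => by ring_nf
      simp_rw [e1, e2]
      rw [L2, L3]
      have hse : s + e = 1/2 := by rw [hs', he]; ring
      have hse2 : (1-s) - e = 1/2 := by rw [hs', he]; ring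
      rw [add_zero, sub_zero, hse, hse2]
      push_cast
      ring
    have : s ^ (2*m+1) ≥ 0 := by positivity
    have h21 : (0:ℝ) < 2*(m:ℝ)+1 := by positivity
    calc Jf m u v ≤ _ := key
      _ = _ := comp
      _ ≤ (1-s)^(2*m+1) / (2*(m:ℝ)+1) := by gcongr ?x / _; linarith

lemma Jf_ge (m : ℕ) {u v cc : ℝ} (hc : cc ≤ 1/4) (h4 : 4*(m:ℝ)*cc^2 ≤ 1)
    (hu : 0 < u) (huc : u ≤ cc) (hv : 0 < v) (hvc : v ≤ cc) :
    (1 - (m:ℝ)*(u+v)^2) * (((1-(u+v)/2)^(2*m+1) - (1/2)^(2*m+1)) / (2*(m:ℝ)+1)) ≤ Jf m u v := by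
  have hcpos : 0 < cc := lt_of_lt_of_le hu huc
  set t := u + v with ht
  have ht2 : t ≤ 2*cc := by rw [ht]; linarith
  have htpos : 0 < t := by rw [ht]; linarith
  have hthalf : t ≤ 1/2 := by linarith
  have he : (0:ℝ) < (1 - u - v)/2 := by rw [ht] at hthalf; linarith [hthalf]
  set e := (1 - u - v)/2 with hee
  have het : e = (1-t)/2 := by rw [hee, ht]; ring
  -- step 1 : compute the comparison integral
  have comp : ∫ x in Ioo 0 e, (1 - (m:ℝ)*t^2) * (1-x-t/2)^(2*m)
      = (1 - (m:ℝ)*t^2) * (((1-t/2)^(2*m+1) - (1/2)^(2*m+1)) / (2*(m:ℝ)+1)) := by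
    rw [IooInt _ (le_of_lt he)]
    rw [intervalIntegral.integral_const_mul]
    have e2 : ∀ x : ℝ, (1-x-t/2)^(2*m) = ((1-t/2)-x)^(2*m) := fun x => by ring_nf
    simp_rw [e2]
    rw [L3]
    have : (1-t/2) - e = 1/2 := by rw [het]; ring
    rw [sub_zero, this]
    push_cast
    ring_nf
  -- step 2 : pointwise comparison
  have key : ∫ x in Ioo 0 e, (1 - (m:ℝ)*t^2) * (1-x-t/2)^(2*m) ≤ Jf m u v := by
    unfold Jf poly
    rw [← hee]
    apply setIntegral_mono_on
    · exact (((by fun_prop : Continuous fun x:ℝ => (1 - (m:ℝ)*t^2) * (1-x-t/2)^(2*m))).integrableOn_Ioc).mono_set Set.Ioo_subset_Ioc_self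
    · exact ((contPoly m u v).integrableOn_Ioc).mono_set Set.Ioo_subset_Ioc_self
    · exact measurableSet_Ioo
    · intro x hx
      obtain ⟨hx0, hx1⟩ := hx
      set y := 1 - x - t/2 with hy
      have hx1' : x < (1-t)/2 := by rw [het] at hx1; exact hx1
      have hyhalf : 1/2 ≤ y := by rw [hy]; linarith
      have hy1 : y ≤ 1 := by rw [hy]; linarith
      have hterm1 : 0 ≤ (x+u)^m * (x+v)^m := by positivity
      have hprod : (1-x-u) * (1-x-v) = y^2 - ((u-v)/2)^2 := by rw [hy, ht]; ring
      have hd : ((u-v)/2)^2 ≤ (t/2)^2 := by rw [ht]; nlinarith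
      have hts : (t/2)^2 ≤ 1/4 := by nlinarith
      have hy2 : 1/4 ≤ y^2 := by nlinarith
      have hstep1 : y^(2*m) * (1 - (m:ℝ)*t^2) ≤ (y^2 - (t/2)^2)^m := by
        have hgoal : True := trivial
        have hw0 : 0 ≤ (t/2)^2 / y^2 := by positivity
        have hw1 : (t/2)^2 / y^2 ≤ 1 := by
          rw [div_le_one (by positivity)]; linarith
        have hbern : 1 + (m:ℝ) * (-((t/2)^2 / y^2)) ≤ (1 + -((t/2)^2 / y^2))^m :=
          one_add_mul_le_pow (by linarith) m
        have hy0 : y ≠ 0 := by intro h0; rw [h0] at hyhalf; linarith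
        have hfact : y^2 - (t/2)^2 = y^2 * (1 + -((t/2)^2 / y^2)) := by
          field_simp
          ring
        have hwt : (m:ℝ) * ((t/2)^2 / y^2) ≤ (m:ℝ) * t^2 := by
          apply mul_le_mul_of_nonneg_left _ (Nat.cast_nonneg m)
          rw [div_le_iff₀ (by positivity : (0:ℝ) < y^2)]
          nlinarith
        have h1 : 1 - (m:ℝ)*t^2 ≤ (1 + -((t/2)^2 / y^2))^m := by
          calc 1 - (m:ℝ)*t^2 ≤ 1 + (m:ℝ) * (-((t/2)^2 / y^2)) := by linarith
            _ ≤ _ := hbern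
        rw [hfact, mul_pow, pow_mul]
        exact mul_le_mul_of_nonneg_left h1 (by positivity)
      have hstep2 : (y^2 - (t/2)^2)^m ≤ (1-x-u)^m * (1-x-v)^m := by
        rw [← mul_pow, hprod]
        exact pow_le_pow_left₀ (by nlinarith) (by nlinarith) m
      calc (1 - (m:ℝ)*t^2) * (1-x-t/2)^(2*m) = y^(2*m) * (1 - (m:ℝ)*t^2) := by
            rw [hy]; ring
        _ ≤ (y^2 - (t/2)^2)^m := hstep1
        _ ≤ (1-x-u)^m * (1-x-v)^m := hstep2
        _ ≤ _ := by linarith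
  linarith [comp ▸ key]

lemma EEmp : MeasurePreserving (⇑EE) (volume : Measure (Fin 4 → ℝ)) volume := by
  have h1 := volume_preserving_piFinSuccAbove (fun _ : Fin 4 => ℝ) 2
  have h2 := (MeasurePreserving.id (volume : Measure ℝ)).prod
    (volume_preserving_piFinSuccAbove (fun _ : Fin 3 => ℝ) 2)
  have h3 := (volume_preserving_prodAssoc (α₁ := ℝ) (β₁ := ℝ) (γ₁ := Fin 2 → ℝ))
  exact ((h3.symm MeasurableEquiv.prodAssoc).comp (h2.comp h1))

lemma measSS : MeasurableSet SS := by
  have : SS = (⋂ i, {a : Fin 4 → ℝ | 0 ≤ a i}) ∩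
      ({a : Fin 4 → ℝ | 2 * a 0 + a 2 + a 3 < 1} ∩ {a | 2 * a 1 + a 2 + a 3 < 1}) := by
    ext a; simp [SS, Set.mem_iInter, and_assoc]
  rw [this]
  apply MeasurableSet.inter
  · exact MeasurableSet.iInter fun i =>
      measurableSet_le measurable_const (measurable_pi_apply i)
  · exact MeasurableSet.inter
      (measurableSet_lt (by fun_prop) measurable_const)
      (measurableSet_lt (by fun_prop) measurable_const)

lemma contG4 (m : ℕ) : Continuous (G4 m) := by unfold G4 poly; fun_prop

lemma intSS (m : ℕ) : Integrable (SS.indicator (G4 m)) := by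
  rw [integrable_indicator_iff measSS]
  have hsub : SS ⊆ Set.Icc 0 1 := by
    rintro a ⟨hp, hA, hB⟩
    have h0 := hp 0; have h1 := hp 1; have h2 := hp 2; have h3 := hp 3
    constructor <;> intro i <;> fin_cases i <;> simp <;> linarith
  exact ((contG4 m).integrableOn_Icc).mono_set hsub

lemma Ff_EE (m : ℕ) (a : Fin 4 → ℝ) : Ff m (EE a) = SS.indicator (G4 m) a := by
  classical
  have c1 : (EE a).1.1 = a 2 := rfl
  have c2 : (EE a).1.2 = a 3 := rfl
  have c3 : (EE a).2 0 = a 0 := rfl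
  have c4 : (EE a).2 1 = a 1 := rfl
  unfold Ff hfun
  rw [c1, c2, c3, c4, Set.indicator_apply, Set.indicator_apply, Set.indicator_apply]
  by_cases hS : (∀ i, 0 ≤ a i) ∧ 2 * a 0 + a 2 + a 3 < 1 ∧ 2 * a 1 + a 2 + a 3 < 1
  · obtain ⟨hp, hA, hB⟩ := hS
    have h00 := hp 0; have h10 := hp 1; have h20 := hp 2; have h30 := hp 3
    rw [if_pos (show a ∈ SS from ⟨hp, hA, hB⟩), if_pos ⟨h20, h30⟩,
      if_pos (show a 0 ∈ Set.Ico (0:ℝ) ((1 - a 2 - a 3)/2) from ⟨h00, by linarith⟩),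
      if_pos (show a 1 ∈ Set.Ico (0:ℝ) ((1 - a 2 - a 3)/2) from ⟨h10, by linarith⟩)]
    unfold G4 poly
    ring
  · rw [if_neg (show a ∉ SS from hS)]
    by_cases hall : ∀ i, 0 ≤ a i
    · by_cases hA : 2 * a 0 + a 2 + a 3 < 1
      · have hB : ¬ (2 * a 1 + a 2 + a 3 < 1) := fun hB => hS ⟨hall, hA, hB⟩
        rw [if_neg (show a 1 ∉ Set.Ico (0:ℝ) ((1 - a 2 - a 3)/2) from
          fun h => hB (by have := h.2; linarith))]
        ring
      · rw [if_neg (show a 0 ∉ Set.Ico (0:ℝ) ((1 - a 2 - a 3)/2) from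
          fun h => hA (by have := h.2; linarith))]
        ring
    · push_neg at hall
      obtain ⟨i, hi⟩ := hall
      fin_cases i
      · rw [if_neg (show a 0 ∉ Set.Ico (0:ℝ) ((1 - a 2 - a 3)/2) from
          fun h => absurd h.1 (by simpa using not_le.mpr hi))]
        ring
      · rw [if_neg (show a 1 ∉ Set.Ico (0:ℝ) ((1 - a 2 - a 3)/2) from
          fun h => absurd h.1 (by simpa using not_le.mpr hi))]
        ring
      · rw [if_neg (show ¬ (0 ≤ a 2 ∧ 0 ≤ a 3) from fun h => absurd h.1 (by simpa using not_le.mpr hi))]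
        ring
      · rw [if_neg (show ¬ (0 ≤ a 2 ∧ 0 ≤ a 3) from fun h => absurd h.2 (by simpa using not_le.mpr hi))]
        ring

lemma intFf (m : ℕ) : Integrable (Ff m) (volume.prod volume) := by
  have h := (EEmp.integrable_comp_emb EE.measurableEmbedding (g := Ff m))
  rw [← Measure.volume_eq_prod]
  refine h.mp ?_
  have : (Ff m) ∘ (⇑EE) = SS.indicator (G4 m) := funext fun a => Ff_EE m a
  rw [this]
  exact intSS m

lemma inner_eq (m : ℕ) (u v : ℝ) : ∫ x, hfun m u v x = Jf m u v := by
  unfold hfun Jf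
  rw [integral_indicator measurableSet_Ico]
  exact integral_Ico_eq_integral_Ioo

lemma psi_eq (m : ℕ) (p : ℝ × ℝ) : ∫ y : Fin 2 → ℝ, Ff m (p, y) = Psi m p := by
  unfold Ff Psi
  dsimp only
  rw [integral_const_mul (if 0 ≤ p.1 ∧ 0 ≤ p.2 then (1:ℝ) else 0)]
  congr 1
  have e : ∀ y : Fin 2 → ℝ, hfun m p.1 p.2 (y 0) * hfun m p.1 p.2 (y 1)
      = ∏ i : Fin 2, hfun m p.1 p.2 (y i) := fun y => (Fin.prod_univ_two (fun i => hfun m p.1 p.2 (y i))).symm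
  simp_rw [e]
  rw [volume_pi, MeasureTheory.integral_fintype_prod_eq_pow (𝕜 := ℝ) (ι := Fin 2) (hfun m p.1 p.2)]
  simp [inner_eq]

lemma fubini_eq (m : ℕ) : (∫ a in SS, G4 m a) = ∫ p : ℝ × ℝ, Psi m p := by
  calc ∫ a in SS, G4 m a = ∫ a, SS.indicator (G4 m) a := (integral_indicator measSS).symm
    _ = ∫ a, Ff m (EE a) := by
        refine integral_congr_ae (Filter.Eventually.of_forall fun a => ?_)
        exact (Ff_EE m a).symm
    _ = ∫ z, Ff m z := EEmp.integral_comp' (Ff m)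
    _ = ∫ p, ∫ y, Ff m (p, y) := by
        rw [Measure.volume_eq_prod, integral_prod _ (intFf m)]
    _ = ∫ p, Psi m p := by
        refine integral_congr_ae (Filter.Eventually.of_forall fun p => ?_)
        exact psi_eq m p

lemma intPsi (m : ℕ) : Integrable (Psi m) := by
  have h := (intFf m).integral_prod_left
  exact h.congr (Filter.Eventually.of_forall fun p => psi_eq m p)

lemma psi_nonneg (m : ℕ) (p : ℝ × ℝ) : 0 ≤ Psi m p := by
  unfold Psi
  apply mul_nonneg _ (sq_nonneg _)
  split <;> norm_num

def Bup (m : ℕ) : ℝ × ℝ → ℝ := (Set.Ioo (0:ℝ) 1 ×ˢ Set.Ioo (0:ℝ) 1).indicator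
  (fun p => ((1 - (p.1+p.2)/2)^(2*m+1) / (2*(m:ℝ)+1))^2)

lemma Bup_nonneg (m : ℕ) (p : ℝ × ℝ) : 0 ≤ Bup m p :=
  Set.indicator_nonneg (fun q _ => by positivity) p

lemma Jf_zero (m : ℕ) {u v : ℝ} (h : 1 - u - v ≤ 0) : Jf m u v = 0 := by
  unfold Jf
  rw [Set.Ioo_eq_empty (by intro hh; linarith [hh]), setIntegral_empty]

lemma psi_le_Bup_pt (m : ℕ) (p : ℝ × ℝ) (h1 : p.1 ≠ 0) (h2 : p.2 ≠ 0) :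
    Psi m p ≤ Bup m p := by
  unfold Psi
  by_cases hpos : 0 ≤ p.1 ∧ 0 ≤ p.2
  · have hu : 0 < p.1 := lt_of_le_of_ne hpos.1 (Ne.symm h1)
    have hv : 0 < p.2 := lt_of_le_of_ne hpos.2 (Ne.symm h2)
    by_cases h11 : p.1 < 1 ∧ p.2 < 1
    · rw [if_pos hpos, one_mul]
      unfold Bup
      rw [Set.indicator_of_mem (show p ∈ Set.Ioo (0:ℝ) 1 ×ˢ Set.Ioo (0:ℝ) 1 from
        ⟨⟨hu, h11.1⟩, ⟨hv, h11.2⟩⟩)]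
      exact pow_le_pow_left₀ (Jf_nonneg m hpos.1 hpos.2) (Jf_le m hu h11.1 hv h11.2) 2
    · have hJ : Jf m p.1 p.2 = 0 := by
        apply Jf_zero
        rcases not_and_or.mp h11 with h | h <;> push_neg at h <;> linarith
      rw [if_pos hpos, one_mul, hJ]
      simpa using Bup_nonneg m p
  · rw [if_neg hpos, zero_mul]
    exact Bup_nonneg m p

lemma psi_le_Bup (m : ℕ) : ∀ᵐ p : ℝ × ℝ, Psi m p ≤ Bup m p := by
  have hnull : volume (({(0:ℝ)} ×ˢ (univ : Set ℝ)) ∪ ((univ : Set ℝ) ×ˢ {(0:ℝ)})) = 0 := by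
    apply measure_union_null <;>
      rw [Measure.volume_eq_prod, Measure.prod_prod] <;> simp
  rw [MeasureTheory.ae_iff]
  refine measure_mono_null ?_ hnull
  intro p hp
  simp only [Set.mem_setOf_eq] at hp
  by_contra hmem
  simp only [Set.mem_union, Set.mem_prod, Set.mem_singleton_iff, Set.mem_univ, and_true,
    true_and, not_or] at hmem
  exact hp (psi_le_Bup_pt m p hmem.1 hmem.2)

lemma intOnBox {f : ℝ × ℝ → ℝ} (hf : Continuous f) {a b : ℝ} {s : Set (ℝ × ℝ)}
    (hs : s ⊆ Set.Icc a b ×ˢ Set.Icc a b) : IntegrableOn f s := by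
  refine IntegrableOn.mono_set ?_ hs
  rw [Set.Icc_prod_Icc]
  exact hf.integrableOn_Icc

lemma intBup (m : ℕ) : Integrable (Bup m) := by
  unfold Bup
  rw [integrable_indicator_iff (measurableSet_Ioo.prod measurableSet_Ioo)]
  exact intOnBox (by fun_prop) (Set.prod_mono Set.Ioo_subset_Icc_self Set.Ioo_subset_Icc_self)

lemma upper (m : ℕ) : ∫ p : ℝ × ℝ, Psi m p ≤
    (4 * (1 - (1/2:ℝ)^(4*m+3))) / ((2*(m:ℝ)+1)^2 * ((4*(m:ℝ)+3) * (4*(m:ℝ)+4))) := by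
  have step1 : ∫ p : ℝ × ℝ, Psi m p ≤ ∫ p : ℝ × ℝ, Bup m p :=
    integral_mono_of_nonneg (Filter.Eventually.of_forall (psi_nonneg m)) (intBup m)
      (psi_le_Bup m)
  refine le_trans step1 (le_of_eq ?_)
  unfold Bup
  rw [integral_indicator (measurableSet_Ioo.prod measurableSet_Ioo)]
  rw [Measure.volume_eq_prod, setIntegral_prod _ (by
    rw [← Measure.volume_eq_prod]
    exact intOnBox (by fun_prop) (Set.prod_mono Set.Ioo_subset_Icc_self Set.Ioo_subset_Icc_self))]
  dsimp only
  have epow : ∀ x : ℝ, ((x^(2*m+1)) / (2*(m:ℝ)+1))^2 = x^(4*m+2) / (2*(m:ℝ)+1)^2 := by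
    intro x
    rw [div_pow, ← pow_mul]
    congr 2
    ring
  have inner : ∀ u : ℝ, (∫ v in Ioo (0:ℝ) 1, ((1 - (u+v)/2)^(2*m+1) / (2*(m:ℝ)+1))^2)
      = (2*((1-u/2)^(4*m+3) - (1-u/2-1/2)^(4*m+3))/((4*(m:ℝ))+3)) / (2*(m:ℝ)+1)^2 := by
    intro u
    simp_rw [epow]
    rw [integral_div]
    congr 1
    rw [IooInt _ (by norm_num)]
    have e2 : ∀ v : ℝ, (1 - (u+v)/2)^(4*m+2) = ((1-u/2) - v/2)^(4*m+2) := by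
      intro v; ring_nf
    simp_rw [e2]
    rw [L4, show 4*m+2+1 = 4*m+3 from by omega]
    push_cast
    ring
  simp_rw [inner]
  rw [integral_div]
  rw [IooInt _ (by norm_num)]
  have hsub : ∀ u : ℝ, 2*((1-u/2)^(4*m+3) - (1-u/2-1/2)^(4*m+3))/((4*(m:ℝ))+3)
      = (2/((4*(m:ℝ))+3)) * (1-u/2)^(4*m+3) - (2/((4*(m:ℝ))+3)) * ((1/2)-u/2)^(4*m+3) := by
    intro u; ring_nf
  simp_rw [hsub]
  rw [intervalIntegral.integral_sub (by apply Continuous.intervalIntegrable; fun_prop)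
    (by apply Continuous.intervalIntegrable; fun_prop),
    intervalIntegral.integral_const_mul, intervalIntegral.integral_const_mul, L4, L4]
  have h0 : ((0:ℝ))^(4*m+3+1) = 0 := zero_pow (by omega)
  push_cast
  rw [show (1:ℝ) - 0/2 = 1 by norm_num, show ((1:ℝ)/2) - 0/2 = (1/2:ℝ) by norm_num]
  rw [show ((1:ℝ)/2) - 1/2 = 0 by norm_num, h0]
  have c1 : (2*(m:ℝ)+1)^2 ≠ 0 := by positivity
  have c2 : (4*(m:ℝ)+3) ≠ 0 := by positivity
  have c3 : (4*(m:ℝ)+4) ≠ 0 := by positivity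
  have e3 : (1:ℝ) - 1/2 = 1/2 := by norm_num
  rw [e3]
  have e4 : ((1/2:ℝ))^(4*m+3+1) = (1/2:ℝ)^(4*m+3) * (1/2) := pow_succ _ _
  have e5 : ((1:ℝ))^(4*m+3+1) = 1 := one_pow _
  rw [e4, e5]
  field_simp
  ring

def Bdn (m : ℕ) (cc : ℝ) : ℝ × ℝ → ℝ := (Set.Ioc (0:ℝ) cc ×ˢ Set.Ioc (0:ℝ) cc).indicator
  (fun p => ((1 - (m:ℝ)*(p.1+p.2)^2) *
    (((1-(p.1+p.2)/2)^(2*m+1) - (1/2:ℝ)^(2*m+1)) / (2*(m:ℝ)+1)))^2)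

lemma lower (m : ℕ) {cc : ℝ} (hc0 : 0 < cc) (hc : cc ≤ 1/4) (h4 : 4*(m:ℝ)*cc^2 ≤ 1) :
    (1 - 4*(m:ℝ)*cc^2)^2 *
      ((4 / ((4*(m:ℝ)+3) * (4*(m:ℝ)+4))) *
        (1 - 2*(1-cc/2)^(4*m+4) + (1-cc)^(4*m+4)) - 2*(1/2:ℝ)^(2*m+1)*cc^2) / (2*(m:ℝ)+1)^2
    ≤ ∫ p : ℝ × ℝ, Psi m p := by
  have hmeas : MeasurableSet (Set.Ioc (0:ℝ) cc ×ˢ Set.Ioc (0:ℝ) cc) :=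
    measurableSet_Ioc.prod measurableSet_Ioc
  have hsubbox : Set.Ioc (0:ℝ) cc ×ˢ Set.Ioc (0:ℝ) cc ⊆ Set.Icc 0 cc ×ˢ Set.Icc 0 cc :=
    Set.prod_mono Set.Ioc_subset_Icc_self Set.Ioc_subset_Icc_self
  -- step A : ∫ Bdn ≤ ∫ Psi
  have hBdn_le : ∀ p : ℝ × ℝ, Bdn m cc p ≤ Psi m p := by
    intro p
    unfold Bdn
    by_cases hp : p ∈ Set.Ioc (0:ℝ) cc ×ˢ Set.Ioc (0:ℝ) cc
    · rw [Set.indicator_of_mem hp]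
      obtain ⟨⟨hu0, huc⟩, hv0, hvc⟩ := hp
      have hL := Jf_ge m hc h4 hu0 huc hv0 hvc
      have hL0 : 0 ≤ (1 - (m:ℝ)*(p.1+p.2)^2) *
          (((1-(p.1+p.2)/2)^(2*m+1) - (1/2:ℝ)^(2*m+1)) / (2*(m:ℝ)+1)) := by
        apply mul_nonneg
        · have hsum2 : (p.1+p.2)^2 ≤ 4*cc^2 := by nlinarith
          have := mul_le_mul_of_nonneg_left hsum2 (Nat.cast_nonneg (α := ℝ) m)
          nlinarith
        · apply div_nonneg _ (by positivity)
          have : (1/2:ℝ) ≤ 1-(p.1+p.2)/2 := by linarith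
          have := pow_le_pow_left₀ (by norm_num : (0:ℝ) ≤ 1/2) this (2*m+1)
          linarith
      unfold Psi
      rw [if_pos ⟨le_of_lt hu0, le_of_lt hv0⟩, one_mul]
      exact pow_le_pow_left₀ hL0 hL 2
    · rw [Set.indicator_of_notMem hp]
      exact psi_nonneg m p
  have stepA : ∫ p : ℝ × ℝ, Bdn m cc p ≤ ∫ p : ℝ × ℝ, Psi m p :=
    integral_mono_of_nonneg
      (Filter.Eventually.of_forall fun p => Set.indicator_nonneg (fun q _ => sq_nonneg _) p)
      (intPsi m) (Filter.Eventually.of_forall hBdn_le)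
  refine le_trans ?_ stepA
  -- step B : pointwise lower bound for the integrand of Bdn on the set
  unfold Bdn
  rw [integral_indicator hmeas]
  have stepB : ∫ p in Set.Ioc (0:ℝ) cc ×ˢ Set.Ioc (0:ℝ) cc,
      ((1 - 4*(m:ℝ)*cc^2)^2 * (((1-(p.1+p.2)/2)^(4*m+2) - 2*(1/2:ℝ)^(2*m+1)) / (2*(m:ℝ)+1)^2))
      ≤ ∫ p in Set.Ioc (0:ℝ) cc ×ˢ Set.Ioc (0:ℝ) cc,
      ((1 - (m:ℝ)*(p.1+p.2)^2) *
        (((1-(p.1+p.2)/2)^(2*m+1) - (1/2:ℝ)^(2*m+1)) / (2*(m:ℝ)+1)))^2 := by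
    apply setIntegral_mono_on (intOnBox (by fun_prop) hsubbox) (intOnBox (by fun_prop) hsubbox)
      hmeas
    rintro p ⟨⟨hu0, huc⟩, hv0, hvc⟩
    set t := p.1 + p.2 with ht
    have ht0 : 0 < t := by rw [ht]; linarith
    have ht2 : t ≤ 2*cc := by rw [ht]; linarith
    have hmt : (m:ℝ)*t^2 ≤ 4*(m:ℝ)*cc^2 := by
      have hsum2 : t^2 ≤ 4*cc^2 := by rw [ht]; nlinarith
      have := mul_le_mul_of_nonneg_left hsum2 (Nat.cast_nonneg (α := ℝ) m)
      nlinarith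
    have hk0 : 0 ≤ 1 - 4*(m:ℝ)*cc^2 := by linarith
    have ha1 : (1-t/2)^(2*m+1) ≤ 1 := by
      apply pow_le_one₀ (by linarith) (by linarith)
    have haq : (1/2:ℝ)^(2*m+1) ≤ (1-t/2)^(2*m+1) :=
      pow_le_pow_left₀ (by norm_num) (by linarith) (2*m+1)
    have hq0 : (0:ℝ) < (1/2:ℝ)^(2*m+1) := by positivity
    have hApos : 0 ≤ ((1-t/2)^(2*m+1) - (1/2:ℝ)^(2*m+1)) / (2*(m:ℝ)+1) := by
      apply div_nonneg (by linarith) (by positivity)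
    -- (1-4mc²)² ≤ (1-mt²)²
    have hsq : (1 - 4*(m:ℝ)*cc^2)^2 ≤ (1 - (m:ℝ)*t^2)^2 := by
      apply pow_le_pow_left₀ hk0 (by linarith) 2
    have hA2 : ((1-t/2)^(4*m+2) - 2*(1/2:ℝ)^(2*m+1)) / (2*(m:ℝ)+1)^2 ≤
        ((((1-t/2)^(2*m+1) - (1/2:ℝ)^(2*m+1)) / (2*(m:ℝ)+1)))^2 := by
      have hpoweq : (1-t/2)^(4*m+2) = ((1-t/2)^(2*m+1))^2 := by
        rw [← pow_mul]; congr 1; ring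
      have hnum : (1-t/2)^(4*m+2) - 2*(1/2:ℝ)^(2*m+1)
          ≤ ((1-t/2)^(2*m+1) - (1/2:ℝ)^(2*m+1))^2 := by
        rw [hpoweq]
        nlinarith [hq0.le, ha1, haq]
      calc ((1-t/2)^(4*m+2) - 2*(1/2:ℝ)^(2*m+1)) / (2*(m:ℝ)+1)^2
          ≤ ((1-t/2)^(2*m+1) - (1/2:ℝ)^(2*m+1))^2 / (2*(m:ℝ)+1)^2 := by gcongr
        _ = _ := (div_pow _ _ _).symm
    calc (1 - 4*(m:ℝ)*cc^2)^2 * (((1-t/2)^(4*m+2) - 2*(1/2:ℝ)^(2*m+1)) / (2*(m:ℝ)+1)^2)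
        ≤ (1 - 4*(m:ℝ)*cc^2)^2 *
            ((((1-t/2)^(2*m+1) - (1/2:ℝ)^(2*m+1)) / (2*(m:ℝ)+1)))^2 := by
          exact mul_le_mul_of_nonneg_left hA2 (sq_nonneg _)
      _ ≤ (1 - (m:ℝ)*t^2)^2 * ((((1-t/2)^(2*m+1) - (1/2:ℝ)^(2*m+1)) / (2*(m:ℝ)+1)))^2 := by
          exact mul_le_mul_of_nonneg_right hsq (sq_nonneg _)
      _ = ((1 - (m:ℝ)*t^2) * (((1-t/2)^(2*m+1) - (1/2:ℝ)^(2*m+1)) / (2*(m:ℝ)+1)))^2 := by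
          rw [mul_pow]
  refine le_trans (le_of_eq ?_) stepB
  -- now compute the explicit integral
  have hvol : volume (Set.Ioc (0:ℝ) cc ×ˢ Set.Ioc (0:ℝ) cc)
      = ENNReal.ofReal cc * ENNReal.ofReal cc := by
    rw [Measure.volume_eq_prod, Measure.prod_prod, Real.volume_Ioc, sub_zero]
  have hX : ∫ p in Set.Ioc (0:ℝ) cc ×ˢ Set.Ioc (0:ℝ) cc, (1-(p.1+p.2)/2)^(4*m+2)
      = (4 / ((4*(m:ℝ)+3) * (4*(m:ℝ)+4))) *
        (1 - 2*(1-cc/2)^(4*m+4) + (1-cc)^(4*m+4)) := by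
    rw [Measure.volume_eq_prod, setIntegral_prod _ (by
      rw [← Measure.volume_eq_prod]
      exact intOnBox (by fun_prop) hsubbox)]
    dsimp only
    have inner : ∀ u : ℝ, (∫ v in Set.Ioc (0:ℝ) cc, (1-(u+v)/2)^(4*m+2))
        = (2/(4*(m:ℝ)+3)) * (1-u/2)^(4*m+3) - (2/(4*(m:ℝ)+3)) * ((1-cc/2)-u/2)^(4*m+3) := by
      intro u
      rw [← intervalIntegral.integral_of_le hc0.le]
      have e2 : ∀ v : ℝ, (1 - (u+v)/2)^(4*m+2) = ((1-u/2) - v/2)^(4*m+2) := by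
        intro v; ring_nf
      simp_rw [e2]
      rw [L4, show 4*m+2+1 = 4*m+3 from by omega]
      push_cast
      ring_nf
    simp_rw [inner]
    rw [← intervalIntegral.integral_of_le hc0.le]
    rw [intervalIntegral.integral_sub (by apply Continuous.intervalIntegrable; fun_prop)
      (by apply Continuous.intervalIntegrable; fun_prop),
      intervalIntegral.integral_const_mul, intervalIntegral.integral_const_mul, L4, L4,
      show 4*m+3+1 = 4*m+4 from by omega]
    have c2 : (4*(m:ℝ)+3) ≠ 0 := by positivity
    have c3 : (4*(m:ℝ)+4) ≠ 0 := by positivity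
    have e5 : ((1:ℝ) - 0/2) = 1 := by norm_num
    have e6 : (1:ℝ)^(4*m+4) = 1 := one_pow _
    have e7 : ((1:ℝ)-cc/2-0/2) = 1-cc/2 := by ring
    have e8 : ((1:ℝ)-cc/2-cc/2) = 1-cc := by ring
    rw [e5, e7, e8, e6]
    push_cast
    field_simp
    ring
  rw [MeasureTheory.integral_const_mul]
  rw [show (fun p : ℝ × ℝ => ((1-(p.1+p.2)/2)^(4*m+2) - 2*(1/2:ℝ)^(2*m+1)) / (2*(m:ℝ)+1)^2)
    = (fun p : ℝ × ℝ => ((1-(p.1+p.2)/2)^(4*m+2) - 2*(1/2:ℝ)^(2*m+1)) / (2*(m:ℝ)+1)^2) from rfl]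
  rw [integral_div]
  rw [integral_sub (intOnBox (by fun_prop) hsubbox) (integrableOn_const (by
    rw [hvol]; exact (ENNReal.mul_lt_top ENNReal.ofReal_lt_top ENNReal.ofReal_lt_top).ne))]
  rw [setIntegral_const, measureReal_def, hvol, ENNReal.toReal_mul, ENNReal.toReal_ofReal hc0.le, hX]
  have c1 : (2*(m:ℝ)+1)^2 ≠ 0 := by positivity
  field_simp
  try ring
  try tauto

lemma rpow1024 (y : ℝ) (c : ℝ) (h : (10:ℝ)*y = c) :
    (1024:ℝ) ^ (y:ℝ) = 2^(c:ℝ) := by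
  rw [show (1024:ℝ) = 2^(10:ℝ) from by
    rw [show (10:ℝ) = ((10:ℕ):ℝ) by norm_num, Real.rpow_natCast]; norm_num]
  rw [← Real.rpow_mul (by norm_num : (0:ℝ) ≤ 2), h]

lemma cseq_id {m : ℕ} (hm : 1 ≤ m) :
    (m:ℝ)*(cseq m)^2 = (m:ℝ)^(-(1/5):ℝ) ∧ (m:ℝ)*(cseq m) = (m:ℝ)^((2/5):ℝ) := by
  have hm0 : (0:ℝ) < m := by exact_mod_cast Nat.pos_of_ne_zero (by omega)
  constructor
  · have e1 : (cseq m)^2 = (m:ℝ)^((-(6/5)):ℝ) := by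
      rw [cseq, ← Real.rpow_natCast ((m:ℝ)^(-(3/5):ℝ)) 2, ← Real.rpow_mul hm0.le]
      congr 1
      norm_num
    rw [e1]
    nth_rewrite 1 [← Real.rpow_one (m:ℝ)]
    rw [← Real.rpow_add hm0, show (1:ℝ) + -(6/5) = -(1/5) from by norm_num]
  · rw [cseq]
    nth_rewrite 1 [← Real.rpow_one (m:ℝ)]
    rw [← Real.rpow_add hm0, show (1:ℝ) + -(3/5) = (2/5) from by norm_num]

lemma cseq_bounds {m : ℕ} (hm : 1024 ≤ m) :
    0 < cseq m ∧ cseq m ≤ 1/4 ∧ 4*(m:ℝ)*(cseq m)^2 ≤ 1 := by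
  have hm0 : (0:ℝ) < m := by exact_mod_cast Nat.pos_of_ne_zero (by omega)
  have hm1024 : (1024:ℝ) ≤ m := by exact_mod_cast hm
  refine ⟨Real.rpow_pos_of_pos hm0 _, ?_, ?_⟩
  · have h1 : (1024:ℝ)^((3/5):ℝ) ≤ (m:ℝ)^((3/5):ℝ) :=
      Real.rpow_le_rpow (by norm_num) hm1024 (by norm_num)
    have h2 : (1024:ℝ)^((3/5):ℝ) = 64 := by
      rw [rpow1024 (3/5) 6 (by norm_num)]
      rw [show (6:ℝ) = ((6:ℕ):ℝ) by norm_num, Real.rpow_natCast]; norm_num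
    have h64 : (64:ℝ) ≤ (m:ℝ)^((3/5):ℝ) := h2 ▸ h1
    rw [cseq, Real.rpow_neg hm0.le]
    have hpos : (0:ℝ) < (m:ℝ)^((3/5):ℝ) := Real.rpow_pos_of_pos hm0 _
    rw [inv_le_comm₀ (by positivity) (by norm_num)]
    linarith [h64]
  · have hm1 : 1 ≤ m := le_trans (by norm_num) hm
    rw [show 4*(m:ℝ)*(cseq m)^2 = 4*((m:ℝ)*(cseq m)^2) from by ring, (cseq_id hm1).1]
    have h1 : (1024:ℝ)^((1/5):ℝ) ≤ (m:ℝ)^((1/5):ℝ) :=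
      Real.rpow_le_rpow (by norm_num) hm1024 (by norm_num)
    have h2 : (1024:ℝ)^((1/5):ℝ) = 4 := by
      rw [rpow1024 (1/5) 2 (by norm_num)]
      rw [show (2:ℝ) = ((2:ℕ):ℝ) by norm_num, Real.rpow_natCast]; norm_num
    have h4 : (4:ℝ) ≤ (m:ℝ)^((1/5):ℝ) := h2 ▸ h1
    have e : (m:ℝ)^(-(1/5):ℝ) = ((m:ℝ)^((1/5):ℝ))⁻¹ := Real.rpow_neg hm0.le _
    have hpos : (0:ℝ) < (m:ℝ)^((1/5):ℝ) := Real.rpow_pos_of_pos hm0 _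
    have hle : (m:ℝ)^(-(1/5):ℝ) ≤ 1/4 := by
      rw [e, inv_le_comm₀ hpos (by norm_num)]
      linarith
    linarith

lemma tend_mcc : Tendsto (fun m : ℕ => 4*(m:ℝ)*(cseq m)^2) atTop (nhds 0) := by
  have h : Tendsto (fun m : ℕ => 4*((m:ℝ)^(-(1/5):ℝ))) atTop (nhds (4*0)) := by
    apply Tendsto.const_mul
    exact (tendsto_rpow_neg_atTop (by norm_num : (0:ℝ) < 1/5)).comp
      tendsto_natCast_atTop_atTop
  rw [mul_zero] at h
  refine Tendsto.congr' ?_ h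
  filter_upwards [eventually_ge_atTop 1] with m hm
  rw [show 4*(m:ℝ)*(cseq m)^2 = 4*((m:ℝ)*(cseq m)^2) from by ring, (cseq_id hm).1]

lemma tend_exp2 : Tendsto (fun m : ℕ => Real.exp (-2*(m:ℝ)^((2/5):ℝ))) atTop (nhds 0) := by
  apply Real.tendsto_exp_atBot.comp
  have hpow : Tendsto (fun m : ℕ => (m:ℝ)^((2/5):ℝ)) atTop atTop :=
    (tendsto_rpow_atTop (by norm_num)).comp tendsto_natCast_atTop_atTop
  have h2 := hpow.const_mul_atTop (show (0:ℝ) < 2 by norm_num)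
  have hneg := tendsto_neg_atTop_atBot.comp h2
  refine hneg.congr fun m => ?_
  simp [neg_mul]

lemma bound_pow {m : ℕ} (hm : 1024 ≤ m) {r : ℝ} (hr : 1/2 ≤ r) (hr1 : r ≤ 1) :
    0 ≤ (1 - cseq m * r)^(4*m+4) ∧
      (1 - cseq m * r)^(4*m+4) ≤ Real.exp (-2*(m:ℝ)^((2/5):ℝ)) := by
  obtain ⟨hc0, hc14, h4m⟩ := cseq_bounds hm
  have hm1 : 1 ≤ m := le_trans (by norm_num) hm
  have hccr : cseq m * (1/2) ≤ cseq m * r := by nlinarith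
  have h1 : 0 ≤ 1 - cseq m * r := by nlinarith
  refine ⟨pow_nonneg h1 _, ?_⟩
  have h2 : 1 - cseq m * r ≤ Real.exp (-(cseq m * (1/2))) := by
    linarith [Real.add_one_le_exp (-(cseq m * (1/2)))]
  calc (1 - cseq m * r)^(4*m+4)
      ≤ (Real.exp (-(cseq m * (1/2))))^(4*m+4) := pow_le_pow_left₀ h1 h2 _
    _ = Real.exp (((4*m+4 : ℕ):ℝ) * (-(cseq m * (1/2)))) := (Real.exp_nat_mul _ _).symm
    _ ≤ Real.exp (-2*(m:ℝ)^((2/5):ℝ)) := by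
        apply Real.exp_le_exp.mpr
        rw [← (cseq_id hm1).2]
        push_cast
        nlinarith [hc0.le, Nat.cast_nonneg (α := ℝ) m]

lemma tend_alpha : Tendsto (fun m : ℕ => (1 - cseq m/2)^(4*m+4)) atTop (nhds 0) := by
  have he : ∀ m : ℕ, cseq m / 2 = cseq m * (1/2) := fun m => by ring
  apply tendsto_of_tendsto_of_tendsto_of_le_of_le' tendsto_const_nhds tend_exp2
  · filter_upwards [eventually_ge_atTop 1024] with m hm
    rw [he m]
    exact (bound_pow hm (le_refl _) (by norm_num)).1
  · filter_upwards [eventually_ge_atTop 1024] with m hm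
    rw [he m]
    exact (bound_pow hm (le_refl _) (by norm_num)).2

lemma tend_beta : Tendsto (fun m : ℕ => (1 - cseq m)^(4*m+4)) atTop (nhds 0) := by
  have he : ∀ m : ℕ, (1 - cseq m) = (1 - cseq m * 1) := fun m => by ring
  apply tendsto_of_tendsto_of_tendsto_of_le_of_le' tendsto_const_nhds tend_exp2
  · filter_upwards [eventually_ge_atTop 1024] with m hm
    rw [he m]
    exact (bound_pow hm (by norm_num) (by norm_num)).1
  · filter_upwards [eventually_ge_atTop 1024] with m hm
    rw [he m]
    exact (bound_pow hm (by norm_num) (by norm_num)).2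

lemma tend_halfpow : Tendsto (fun m : ℕ => (1/2:ℝ)^(4*m+3)) atTop (nhds 0) := by
  apply tendsto_of_tendsto_of_tendsto_of_le_of_le' tendsto_const_nhds
    (tendsto_pow_atTop_nhds_zero_of_lt_one (by norm_num : (0:ℝ) ≤ 1/2) (by norm_num))
  · exact Filter.Eventually.of_forall fun m => by positivity
  · exact Filter.Eventually.of_forall fun m =>
      pow_le_pow_of_le_one (by norm_num) (by norm_num) (by omega)

lemma tend_T : Tendsto
    (fun m : ℕ => 16*(m:ℝ)^4*(2*(1/2:ℝ)^(2*m+1)*(cseq m)^2)/(2*(m:ℝ)+1)^2)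
    atTop (nhds 0) := by
  have hbig : Tendsto (fun m : ℕ => 16*((m:ℝ)^4/4^m)) atTop (nhds (16*0)) :=
    (tendsto_pow_const_div_const_pow_of_one_lt 4 (by norm_num : (1:ℝ) < 4)).const_mul 16
  rw [mul_zero] at hbig
  apply tendsto_of_tendsto_of_tendsto_of_le_of_le' tendsto_const_nhds hbig
  · filter_upwards [eventually_ge_atTop 1024] with m hm
    have hc0 := (cseq_bounds hm).1
    positivity
  · filter_upwards [eventually_ge_atTop 1024] with m hm
    obtain ⟨hc0, hc14, _⟩ := cseq_bounds hm
    have hq : ((1/2:ℝ))^(2*m+1) = (1/2)*((1/4:ℝ))^m := by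
      have h14 : ((1/4:ℝ))^m = ((1/2:ℝ))^(2*m) := by
        rw [pow_mul]; norm_num
      rw [h14, pow_succ]; ring
    have hcc1 : (cseq m)^2 ≤ 1 := by nlinarith
    have hD1 : (1:ℝ) ≤ (2*(m:ℝ)+1)^2 := by nlinarith [Nat.cast_nonneg (α := ℝ) m]
    have hX0 : 0 ≤ 16*(m:ℝ)^4*(2*(1/2:ℝ)^(2*m+1)*(cseq m)^2) := by positivity
    calc 16*(m:ℝ)^4*(2*(1/2:ℝ)^(2*m+1)*(cseq m)^2)/(2*(m:ℝ)+1)^2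
        ≤ 16*(m:ℝ)^4*(2*(1/2:ℝ)^(2*m+1)*(cseq m)^2) := by
          apply div_le_self hX0 hD1
      _ ≤ 16*(m:ℝ)^4*(2*(1/2:ℝ)^(2*m+1)*1) := by
          apply mul_le_mul_of_nonneg_left _ (by positivity)
          apply mul_le_mul_of_nonneg_left hcc1 (by positivity)
      _ = 16*((m:ℝ)^4*(1/4:ℝ)^m) := by rw [hq]; ring
      _ ≤ 16*((m:ℝ)^4/4^m) := by
          rw [show ((1/4:ℝ))^m = 1/(4:ℝ)^m from by rw [one_div_pow]]
          rw [mul_one_div]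

lemma tend_R : Tendsto
    (fun m : ℕ => 64*(m:ℝ)^4/((2*(m:ℝ)+1)^2*((4*(m:ℝ)+3)*(4*(m:ℝ)+4))))
    atTop (nhds 1) := by
  have h0 : Tendsto (fun m : ℕ => 1/(m:ℝ)) atTop (nhds 0) :=
    tendsto_one_div_atTop_nhds_zero_nat
  have hg : ContinuousAt (fun t : ℝ => 64/((2+t)^2*((4+3*t)*(4+4*t)))) 0 :=
    ContinuousAt.div continuousAt_const (by fun_prop) (by norm_num)
  have hcomp := hg.tendsto.comp h0
  have hcomp' : Tendsto ((fun t : ℝ => 64/((2+t)^2*((4+3*t)*(4+4*t)))) ∘ fun m : ℕ => 1/(m:ℝ))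
      atTop (nhds 1) := by
    convert hcomp using 2
    norm_num
  refine Tendsto.congr' ?_ hcomp' 
  filter_upwards [eventually_ge_atTop 1] with m hm
  have hm0 : (m:ℝ) ≠ 0 := by
    have : (1:ℝ) ≤ (m:ℝ) := by exact_mod_cast hm
    linarith
  show (fun t : ℝ => 64/((2+t)^2*((4+3*t)*(4+4*t)))) ((fun m : ℕ => 1/(m:ℝ)) m)
      = 64*(m:ℝ)^4/((2*(m:ℝ)+1)^2*((4*(m:ℝ)+3)*(4*(m:ℝ)+4)))
  dsimp only
  rw [div_eq_div_iff (by positivity) (by positivity)]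
  field_simp

theorem stmt_16 :
    Filter.Tendsto
      (fun m : ℕ => 16 * (m : ℝ) ^ 4 *
        ∫ a in {a : Fin 4 → ℝ | (∀ i, 0 ≤ a i) ∧
            2 * a 0 + a 2 + a 3 < 1 ∧ 2 * a 1 + a 2 + a 3 < 1},
          ((a 0 + a 2) ^ m * (a 0 + a 3) ^ m +
              (1 - a 0 - a 2) ^ m * (1 - a 0 - a 3) ^ m) *
            ((a 1 + a 2) ^ m * (a 1 + a 3) ^ m +
              (1 - a 1 - a 2) ^ m * (1 - a 1 - a 3) ^ m))
      Filter.atTop (nhds 1) := by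
  have hrw : (fun m : ℕ => 16 * (m : ℝ) ^ 4 *
        ∫ a in {a : Fin 4 → ℝ | (∀ i, 0 ≤ a i) ∧
            2 * a 0 + a 2 + a 3 < 1 ∧ 2 * a 1 + a 2 + a 3 < 1},
          ((a 0 + a 2) ^ m * (a 0 + a 3) ^ m +
              (1 - a 0 - a 2) ^ m * (1 - a 0 - a 3) ^ m) *
            ((a 1 + a 2) ^ m * (a 1 + a 3) ^ m +
              (1 - a 1 - a 2) ^ m * (1 - a 1 - a 3) ^ m))
      = fun m : ℕ => 16 * (m:ℝ)^4 * ∫ p : ℝ × ℝ, Psi m p := by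
    funext m
    congr 1
    exact fubini_eq m
  rw [hrw]
  have TUB : Tendsto (fun m : ℕ => 16*(m:ℝ)^4 * UBs m) atTop (nhds 1) := by
    have heq : ∀ m : ℕ, 16*(m:ℝ)^4 * UBs m =
        (64*(m:ℝ)^4/((2*(m:ℝ)+1)^2*((4*(m:ℝ)+3)*(4*(m:ℝ)+4)))) * (1 - (1/2:ℝ)^(4*m+3)) := by
      intro m
      unfold UBs
      have d1 : ((4*(m:ℝ)+3) * (4*(m:ℝ)+4)) ≠ 0 := by positivity
      have d2 : ((2*(m:ℝ)+1)^2) ≠ 0 := by positivity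
      field_simp
      ring
    refine Tendsto.congr (fun m => (heq m).symm) ?_
    have h := tend_R.mul (((tendsto_const_nhds (x := (1:ℝ)))).sub tend_halfpow)
    convert h using 2
    norm_num
  have TLB : Tendsto (fun m : ℕ => 16*(m:ℝ)^4 * LBs m) atTop (nhds 1) := by
    have heq : ∀ m : ℕ, 16*(m:ℝ)^4 * LBs m =
        (1 - 4*(m:ℝ)*(cseq m)^2)^2 *
          ((64*(m:ℝ)^4/((2*(m:ℝ)+1)^2*((4*(m:ℝ)+3)*(4*(m:ℝ)+4)))) *
            (1 - 2*(1-cseq m/2)^(4*m+4) + (1-cseq m)^(4*m+4))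
          - 16*(m:ℝ)^4*(2*(1/2:ℝ)^(2*m+1)*(cseq m)^2)/(2*(m:ℝ)+1)^2) := by
      intro m
      unfold LBs
      generalize (1 - cseq m/2)^(4*m+4) = A
      generalize (1 - cseq m)^(4*m+4) = B
      generalize ((1:ℝ)/2)^(2*m+1) = Q
      generalize (cseq m)^2 = C
      have d1 : ((4*(m:ℝ)+3) * (4*(m:ℝ)+4)) ≠ 0 := by positivity
      have d2 : ((2*(m:ℝ)+1)^2) ≠ 0 := by positivity
      field_simp
      ring
    have hk := (((tendsto_const_nhds (x := (1:ℝ)))).sub tend_mcc).pow 2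
    have hW := (((tendsto_const_nhds (x := (1:ℝ)))).sub (tend_alpha.const_mul 2)).add tend_beta
    have h := hk.mul ((tend_R.mul hW).sub tend_T)
    refine Tendsto.congr (fun m => (heq m).symm) ?_
    convert h using 2
    norm_num
  have hup : ∀ m : ℕ, 16*(m:ℝ)^4 * (∫ p : ℝ × ℝ, Psi m p) ≤ 16*(m:ℝ)^4 * UBs m := by
    intro m
    have h1 : (∫ p : ℝ × ℝ, Psi m p) ≤ UBs m := by
      unfold UBs
      exact upper m
    exact mul_le_mul_of_nonneg_left h1 (by positivity)
  have hlow : ∀ᶠ m : ℕ in atTop, 16*(m:ℝ)^4 * LBs m ≤ 16*(m:ℝ)^4 * (∫ p : ℝ × ℝ, Psi m p) := by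
    filter_upwards [eventually_ge_atTop 1024] with m hm
    obtain ⟨hc0, hc14, h4⟩ := cseq_bounds hm
    have h1 : LBs m ≤ ∫ p : ℝ × ℝ, Psi m p := by
      unfold LBs
      exact lower m hc0 hc14 h4
    exact mul_le_mul_of_nonneg_left h1 (by positivity)
  exact tendsto_of_tendsto_of_tendsto_of_le_of_le' TLB TUB hlow
    (Filter.Eventually.of_forall hup)
end
end

section
/- For real t1, t2, t3, t4 with |t_i| < q^{-1/2}/2, the sum over all 4-tuples of monic polynomials (A,B,C,D) in F_q[t] with AC = BD of t1^{deg A} t2^{deg B} t3^{deg C} t4^{deg D} / q^{(deg A + deg B + deg C + deg D)/2} equals sum over nonnegative integers a1,a2,a3,a4 of t1^{a1+a3} t2^{a1+a4} t3^{a2+a4} t4^{a2+a3} minus q^{-1} times sum over nonnegative a1,a2,a3,a4 of t1^{a1+a3+1} t2^{a1+a4+1} t3^{a2+a4+1} t4^{a2+a3+1}. -/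
open Polynomial


lemma aux_summable_mul_abs {α β : Type*} {f : α → ℝ} {g : β → ℝ}
    (hf : Summable fun a => |f a|) (hg : Summable fun b => |g b|) :
    Summable fun p : α × β => |f p.1 * g p.2| :=
  (hf.mul_of_nonneg hg (fun _ => abs_nonneg _) fun _ => abs_nonneg _).congr
    fun p => (abs_mul _ _).symm

lemma aux_summable_mul {α β : Type*} {f : α → ℝ} {g : β → ℝ}
    (hf : Summable fun a => |f a|) (hg : Summable fun b => |g b|) :
    Summable fun p : α × β => f p.1 * g p.2 :=
  summable_abs_iff.mp (aux_summable_mul_abs hf hg)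

lemma aux_tsum_mul {α β : Type*} {f : α → ℝ} {g : β → ℝ}
    (hf : Summable fun a => |f a|) (hg : Summable fun b => |g b|) :
    ∑' p : α × β, f p.1 * g p.2 = (∑' a, f a) * ∑' b, g b := by
  rw [Summable.tsum_prod' (aux_summable_mul hf hg) fun a => (summable_abs_iff.mp hg).mul_left (f a)]
  calc ∑' (a : α) (b : β), f (a, b).1 * g (a, b).2
      = ∑' (a : α), f a * ∑' (b : β), g b :=
        tsum_congr fun a =>
          (show (∑' (b : β), f a * g b) = f a * ∑' (b : β), g b from tsum_mul_left)
    _ = (∑' a, f a) * ∑' b, g b := tsum_mul_right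

lemma aux_geo_abs {t : ℝ} (ht : |t| < 1) : Summable fun n : ℕ => |t ^ n| := by
  simpa [abs_pow] using summable_geometric_of_lt_one (abs_nonneg t) ht

set_option maxHeartbeats 1000000 in
lemma aux_tsum_nat4 {w x y z : ℝ} (hw : |w| < 1) (hx : |x| < 1) (hy : |y| < 1) (hz : |z| < 1) :
    ∑' a : ℕ × ℕ × ℕ × ℕ, w ^ a.1 * (x ^ a.2.1 * (y ^ a.2.2.1 * z ^ a.2.2.2))
      = (1 - w)⁻¹ * ((1 - x)⁻¹ * ((1 - y)⁻¹ * (1 - z)⁻¹)) := by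
  have h2 : Summable fun b : ℕ × ℕ => |y ^ b.1 * z ^ b.2| :=
    aux_summable_mul_abs (f := fun n : ℕ => y ^ n) (g := fun n : ℕ => z ^ n)
      (aux_geo_abs hy) (aux_geo_abs hz)
  have h3 : Summable fun b : ℕ × ℕ × ℕ => |x ^ b.1 * (y ^ b.2.1 * z ^ b.2.2)| :=
    aux_summable_mul_abs (f := fun n : ℕ => x ^ n) (g := fun b : ℕ × ℕ => y ^ b.1 * z ^ b.2)
      (aux_geo_abs hx) h2
  rw [aux_tsum_mul (f := fun n : ℕ => w ^ n) (g := fun b : ℕ × ℕ × ℕ => x ^ b.1 * (y ^ b.2.1 * z ^ b.2.2)) (aux_geo_abs hw) h3]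
  rw [aux_tsum_mul (f := fun n : ℕ => x ^ n) (g := fun b : ℕ × ℕ => y ^ b.1 * z ^ b.2) (aux_geo_abs hx) h2]
  rw [aux_tsum_mul (f := fun n : ℕ => y ^ n) (g := fun n : ℕ => z ^ n) (aux_geo_abs hy) (aux_geo_abs hz)]
  rw [
    tsum_geometric_of_norm_lt_one (by rwa [Real.norm_eq_abs] : ‖w‖ < 1),
    tsum_geometric_of_norm_lt_one (by rwa [Real.norm_eq_abs] : ‖x‖ < 1),
    tsum_geometric_of_norm_lt_one (by rwa [Real.norm_eq_abs] : ‖y‖ < 1),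
    tsum_geometric_of_norm_lt_one (by rwa [Real.norm_eq_abs] : ‖z‖ < 1)]


section Count
variable (F : Type*) [Field F]

noncomputable def monicDegEquiv (n : ℕ) :
    {p : F[X] // p.Monic ∧ p.natDegree = n} ≃ Polynomial.degreeLT F n where
  toFun p := ⟨p.1 - X ^ n, by
    rcases p with ⟨p, hm, hd⟩
    rw [Polynomial.mem_degreeLT]
    have h1 : p.degree = (X ^ n : F[X]).degree := by
      rw [degree_X_pow, ← hd, degree_eq_natDegree hm.ne_zero]
    have := Polynomial.degree_sub_lt h1 hm.ne_zero (by
      rw [hm.leadingCoeff, (monic_X_pow n).leadingCoeff])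
    rwa [degree_eq_natDegree hm.ne_zero, hd] at this⟩
  invFun v := ⟨X ^ n + v.1, by
    have hv : (v.1 : F[X]).degree < n := Polynomial.mem_degreeLT.mp v.2
    refine ⟨Polynomial.monic_X_pow_add ?_, ?_⟩
    · exact hv
    · have : (X ^ n + v.1 : F[X]).degree = n := by
        rw [degree_add_eq_left_of_degree_lt]
        · exact degree_X_pow n
        · rwa [degree_X_pow]
      exact natDegree_eq_of_degree_eq_some this⟩
  left_inv p := by ext : 1; simp
  right_inv v := by ext : 1; simp


variable [Fintype F]

noncomputable instance instFinMonic (n : ℕ) : Fintype {p : F[X] // p.Monic ∧ p.natDegree = n} :=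
  Fintype.ofEquiv (Fin n → F)
    (((monicDegEquiv F n).trans (Polynomial.degreeLTEquiv F n).toEquiv).symm)

lemma card_monic (n : ℕ) :
    Fintype.card {p : F[X] // p.Monic ∧ p.natDegree = n} = Fintype.card F ^ n := by
  rw [Fintype.card_congr ((monicDegEquiv F n).trans (Polynomial.degreeLTEquiv F n).toEquiv)]
  simp [Fintype.card_fun]

noncomputable instance instFinMonicFiber (n : ℕ) :
    Fintype {x : {p : F[X] // p.Monic} // x.1.natDegree = n} :=
  Fintype.ofEquiv _ ((Equiv.subtypeSubtypeEquivSubtypeInter _ _).symm :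
    {p : F[X] // p.Monic ∧ p.natDegree = n} ≃ _)

lemma card_monic_fiber (n : ℕ) :
    Fintype.card {x : {p : F[X] // p.Monic} // x.1.natDegree = n} = Fintype.card F ^ n := by
  rw [← card_monic F n]
  exact Fintype.card_congr (Equiv.subtypeSubtypeEquivSubtypeInter (fun p : F[X] => p.Monic) (fun p => p.natDegree = n))

lemma summable_monic_abs (x : ℝ) (hx : (Fintype.card F : ℝ) * |x| < 1) :
    Summable (fun p : {p : F[X] // p.Monic} => |x| ^ (p : F[X]).natDegree) := by
  set q : ℝ := (Fintype.card F : ℝ)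
  have hq0 : 0 ≤ q * |x| := mul_nonneg (Nat.cast_nonneg _) (abs_nonneg x)
  rw [← Equiv.summable_iff (Equiv.sigmaFiberEquiv (fun p : {p : F[X] // p.Monic} => p.1.natDegree))]
  simp only [Function.comp_def]
  rw [summable_sigma_of_nonneg (fun _ => pow_nonneg (abs_nonneg x) _)]
  constructor
  · intro n; exact .of_finite
  · have key : ∀ n : ℕ, ∑' y : {x_1 : {p : F[X] // p.Monic} // x_1.1.natDegree = n},
        |x| ^ (y.1.1 : F[X]).natDegree = (q * |x|) ^ n := by
      intro n
      rw [tsum_congr (fun y : {x_1 : {p : F[X] // p.Monic} // x_1.1.natDegree = n} =>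
        by rw [y.2] : ∀ y : {x_1 : {p : F[X] // p.Monic} // x_1.1.natDegree = n},
          |x| ^ (y.1.1 : F[X]).natDegree = |x| ^ n)]
      rw [tsum_fintype]
      simp [Finset.sum_const, card_monic_fiber F n, mul_pow, q]
    exact (summable_geometric_of_lt_one hq0 hx).congr fun n => (key n).symm

lemma summable_monic (x : ℝ) (hx : (Fintype.card F : ℝ) * |x| < 1) :
    Summable (fun p : {p : F[X] // p.Monic} => x ^ (p : F[X]).natDegree) := by
  rw [← summable_abs_iff]
  exact (summable_monic_abs F x hx).congr fun p => by rw [abs_pow]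

lemma tsum_monic (x : ℝ) (hx : (Fintype.card F : ℝ) * |x| < 1) :
    ∑' p : {p : F[X] // p.Monic}, x ^ (p : F[X]).natDegree
      = (1 - (Fintype.card F : ℝ) * x)⁻¹ := by
  set q : ℝ := (Fintype.card F : ℝ) with hq
  have hs := summable_monic F x hx
  have hσ : Summable ((fun p : {p : F[X] // p.Monic} => x ^ (p : F[X]).natDegree) ∘
      (Equiv.sigmaFiberEquiv (fun p : {p : F[X] // p.Monic} => p.1.natDegree))) :=
    (Equiv.summable_iff _).mpr hs
  rw [← Equiv.tsum_eq (Equiv.sigmaFiberEquiv (fun p : {p : F[X] // p.Monic} => p.1.natDegree))]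
  simp only [Function.comp_def] at hσ
  rw [Summable.tsum_sigma' (fun n => .of_finite) hσ]
  have key : ∀ n : ℕ, ∑' y : {x_1 : {p : F[X] // p.Monic} // x_1.1.natDegree = n},
      x ^ (y.1.1 : F[X]).natDegree = (q * x) ^ n := by
    intro n
    rw [tsum_congr (fun y : {x_1 : {p : F[X] // p.Monic} // x_1.1.natDegree = n} =>
      by rw [y.2] : ∀ y : {x_1 : {p : F[X] // p.Monic} // x_1.1.natDegree = n},
        x ^ (y.1.1 : F[X]).natDegree = x ^ n)]
    rw [tsum_fintype]
    simp [Finset.sum_const, card_monic_fiber F n, mul_pow, q]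
  refine (tsum_congr (fun b => ?_)).trans (tsum_geometric_of_norm_lt_one ?_)
  · exact key b
  · rwa [Real.norm_eq_abs, abs_mul, abs_of_nonneg (Nat.cast_nonneg _ : (0:ℝ) ≤ q)]

end Count

section Bij
variable {F : Type*} [Field F] [DecidableEq F]

lemma gcd_coprime_eq_one {R S : F[X]} (h : IsCoprime R S) : gcd R S = 1 :=
  (normalize_gcd R S).symm.trans (normalize_eq_one.mpr ((gcd_isUnit_iff R S).mpr h))

lemma gcd_of_monic_coprime {G R S : F[X]} (hG : G.Monic) (h : IsCoprime R S) :
    gcd (G * R) (G * S) = G := by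
  rw [gcd_mul_left, gcd_coprime_eq_one h, mul_one, hG.normalize_eq_self]

lemma pair_unique {G₁ G₂ R₁ R₂ S₁ S₂ : F[X]} (hG₁ : G₁.Monic) (hG₂ : G₂.Monic)
    (h₁ : IsCoprime R₁ S₁) (h₂ : IsCoprime R₂ S₂)
    (e₁ : G₁ * R₁ = G₂ * R₂) (e₂ : G₁ * S₁ = G₂ * S₂) :
    G₁ = G₂ ∧ R₁ = R₂ ∧ S₁ = S₂ := by
  have hG : G₁ = G₂ := by
    rw [← gcd_of_monic_coprime hG₁ h₁, e₁, e₂, gcd_of_monic_coprime hG₂ h₂]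
  subst hG
  exact ⟨rfl, mul_left_cancel₀ hG₁.ne_zero e₁, mul_left_cancel₀ hG₁.ne_zero e₂⟩

lemma pair_exists {A B : F[X]} (hA : A.Monic) (hB : B.Monic) :
    ∃ G R S : F[X], G.Monic ∧ R.Monic ∧ S.Monic ∧ IsCoprime R S ∧ A = G * R ∧ B = G * S := by
  set G := gcd A B with hGdef
  have hG0 : G ≠ 0 := gcd_ne_zero_of_left hA.ne_zero
  have hG : G.Monic := by
    have := Polynomial.monic_normalize (p := G) hG0
    rwa [hGdef, normalize_gcd] at this
  obtain ⟨R, hR⟩ := gcd_dvd_left A B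
  obtain ⟨S, hS⟩ := gcd_dvd_right A B
  have hRm : R.Monic := hG.of_mul_monic_left (hR ▸ hA)
  have hSm : S.Monic := hG.of_mul_monic_left (hS ▸ hB)
  have hcop : IsCoprime R S := by
    have h1 : G * gcd R S = G := by
      conv_lhs => rw [← hG.normalize_eq_self]
      rw [← gcd_mul_left, ← hR, ← hS, hGdef]
    have h2 : gcd R S = 1 := by
      have := mul_left_cancel₀ hG0 (h1.trans (mul_one G).symm)
      exact this
    exact (gcd_isUnit_iff R S).mp (h2 ▸ isUnit_one)
  exact ⟨G, R, S, hG, hRm, hSm, hcop, hR, hS⟩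

variable (F) in
noncomputable def psiEquiv :
    {p : F[X] // p.Monic} ×
      {rs : {p : F[X] // p.Monic} × {p : F[X] // p.Monic} // IsCoprime rs.1.1 rs.2.1} ≃
    {p : F[X] // p.Monic} × {p : F[X] // p.Monic} :=
  Equiv.ofBijective
    (fun x => (⟨x.1.1 * x.2.1.1.1, x.1.2.mul x.2.1.1.2⟩, ⟨x.1.1 * x.2.1.2.1, x.1.2.mul x.2.1.2.2⟩))
    (by
      constructor
      · rintro ⟨⟨D₁, hD₁⟩, ⟨⟨⟨R₁, hR₁⟩, ⟨S₁, hS₁⟩⟩, hc₁⟩⟩ ⟨⟨D₂, hD₂⟩, ⟨⟨⟨R₂, hR₂⟩, ⟨S₂, hS₂⟩⟩, hc₂⟩⟩ h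
        simp only [Prod.mk.injEq, Subtype.mk.injEq] at h
        obtain ⟨e1, e2, e3⟩ := pair_unique hD₁ hD₂ hc₁ hc₂ h.1 h.2
        simp only [Prod.mk.injEq, Subtype.mk.injEq]
        exact ⟨e1, e2, e3⟩
      · rintro ⟨⟨A, hA⟩, ⟨B, hB⟩⟩
        obtain ⟨G, R, S, hG, hR, hS, hcop, e1, e2⟩ := pair_exists hA hB
        exact ⟨⟨⟨G, hG⟩, ⟨⟨⟨R, hR⟩, ⟨S, hS⟩⟩, hcop⟩⟩, by
          simp only [Prod.mk.injEq, Subtype.mk.injEq]; exact ⟨e1.symm, e2.symm⟩⟩)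

variable (F) in
noncomputable def phiEquiv :
    {p : F[X] // p.Monic} × {p : F[X] // p.Monic} ×
      {rs : {p : F[X] // p.Monic} × {p : F[X] // p.Monic} // IsCoprime rs.1.1 rs.2.1} ≃
    {x : F[X] × F[X] × F[X] × F[X] //
        x.1.Monic ∧ x.2.1.Monic ∧ x.2.2.1.Monic ∧ x.2.2.2.Monic ∧
          x.1 * x.2.2.1 = x.2.1 * x.2.2.2} :=
  Equiv.ofBijective
    (fun x => ⟨(x.1.1 * x.2.2.1.1.1, x.1.1 * x.2.2.1.2.1,
                x.2.1.1 * x.2.2.1.2.1, x.2.1.1 * x.2.2.1.1.1),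
      x.1.2.mul x.2.2.1.1.2, x.1.2.mul x.2.2.1.2.2,
      x.2.1.2.mul x.2.2.1.2.2, x.2.1.2.mul x.2.2.1.1.2, by ring⟩)
    (by
      constructor
      · rintro ⟨⟨G₁, hG₁⟩, ⟨H₁, hH₁⟩, ⟨⟨⟨R₁, hR₁⟩, ⟨S₁, hS₁⟩⟩, hc₁⟩⟩
          ⟨⟨G₂, hG₂⟩, ⟨H₂, hH₂⟩, ⟨⟨⟨R₂, hR₂⟩, ⟨S₂, hS₂⟩⟩, hc₂⟩⟩ h
        simp only [Subtype.mk.injEq, Prod.mk.injEq] at h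
        obtain ⟨e1, e2, e3⟩ := pair_unique hG₁ hG₂ hc₁ hc₂ h.1 h.2.1
        subst e2; subst e3
        have e4 : H₁ = H₂ := mul_right_cancel₀ hS₁.ne_zero h.2.2.1
        simp only [Prod.mk.injEq, Subtype.mk.injEq]
        exact ⟨e1, e4, trivial⟩
      · rintro ⟨⟨A, B, C, D⟩, hA, hB, hC, hD, hABCD⟩
        obtain ⟨G, R, S, hG, hR, hS, hcop, e1, e2⟩ := pair_exists hA hB
        have key : R * C = S * D := by
          apply mul_left_cancel₀ hG.ne_zero
          rw [← mul_assoc, ← mul_assoc, ← e1, ← e2, hABCD]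
        have hSC : S ∣ C := by
          refine (hcop.symm).dvd_of_dvd_mul_left ?_
          exact ⟨D, key⟩
        obtain ⟨H, hH⟩ := hSC
        have hHm : H.Monic := hS.of_mul_monic_left (hH ▸ hC)
        have hDval : D = H * R := by
          apply mul_left_cancel₀ hS.ne_zero
          rw [← key, hH]; ring
        refine ⟨⟨⟨G, hG⟩, ⟨H, hHm⟩, ⟨⟨⟨R, hR⟩, ⟨S, hS⟩⟩, hcop⟩⟩, ?_⟩
        simp only [Subtype.mk.injEq, Prod.mk.injEq]
        exact ⟨e1.symm, e2.symm, by rw [hH]; ring, by rw [hDval]⟩)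

end Bij

section Cop
open Polynomial
variable (F : Type*) [Field F] [Fintype F]

lemma summable_cop_abs (x y : ℝ) (hx : (Fintype.card F : ℝ) * |x| < 1)
    (hy : (Fintype.card F : ℝ) * |y| < 1) :
    Summable fun rs : {rs : {p : F[X] // p.Monic} × {p : F[X] // p.Monic} //
        IsCoprime rs.1.1 rs.2.1} =>
      |x ^ rs.1.1.1.natDegree * y ^ rs.1.2.1.natDegree| := by
  have hfx : Summable fun p : {p : F[X] // p.Monic} => |x ^ p.1.natDegree| :=
    (summable_monic_abs F x hx).congr fun p => (abs_pow x _).symm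
  have hfy : Summable fun p : {p : F[X] // p.Monic} => |y ^ p.1.natDegree| :=
    (summable_monic_abs F y hy).congr fun p => (abs_pow y _).symm
  have hpair : Summable fun p : {p : F[X] // p.Monic} × {p : F[X] // p.Monic} =>
      |x ^ p.1.1.natDegree * y ^ p.2.1.natDegree| :=
    aux_summable_mul_abs (f := fun p : {p : F[X] // p.Monic} => x ^ p.1.natDegree)
      (g := fun p : {p : F[X] // p.Monic} => y ^ p.1.natDegree) hfx hfy
  exact hpair.subtype _

lemma cop_eval (x y : ℝ) (hx : (Fintype.card F : ℝ) * |x| < 1)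
    (hy : (Fintype.card F : ℝ) * |y| < 1) :
    ∑' rs : {rs : {p : F[X] // p.Monic} × {p : F[X] // p.Monic} //
        IsCoprime rs.1.1 rs.2.1},
      x ^ rs.1.1.1.natDegree * y ^ rs.1.2.1.natDegree
      = (1 - (Fintype.card F : ℝ) * (x * y)) *
        ((1 - (Fintype.card F : ℝ) * x)⁻¹ * (1 - (Fintype.card F : ℝ) * y)⁻¹) := by
  classical
  set q : ℝ := (Fintype.card F : ℝ) with hqdef
  have hq1 : (1 : ℝ) ≤ q := by
    rw [hqdef]; exact_mod_cast Nat.one_le_iff_ne_zero.mpr Fintype.card_ne_zero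
  have hq0 : (0 : ℝ) ≤ q := le_trans zero_le_one hq1
  have hyle : |y| ≤ 1 := by
    nlinarith [abs_nonneg y]
  have hxy : q * |x * y| < 1 := by
    rw [abs_mul]
    calc q * (|x| * |y|) = q * |x| * |y| := by ring
    _ ≤ q * |x| * 1 := by
        exact mul_le_mul_of_nonneg_left hyle (mul_nonneg hq0 (abs_nonneg x))
    _ < 1 := by rwa [mul_one]
  have hfx : Summable fun p : {p : F[X] // p.Monic} => |x ^ p.1.natDegree| :=
    (summable_monic_abs F x hx).congr fun p => (abs_pow x _).symm
  have hfy : Summable fun p : {p : F[X] // p.Monic} => |y ^ p.1.natDegree| :=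
    (summable_monic_abs F y hy).congr fun p => (abs_pow y _).symm
  have hfxy : Summable fun p : {p : F[X] // p.Monic} => |(x * y) ^ p.1.natDegree| :=
    (summable_monic_abs F (x * y) hxy).congr fun p => (abs_pow (x * y) _).symm
  have e0 : ∑' p : {p : F[X] // p.Monic} × {p : F[X] // p.Monic},
      x ^ p.1.1.natDegree * y ^ p.2.1.natDegree = (1 - q * x)⁻¹ * (1 - q * y)⁻¹ := by
    rw [aux_tsum_mul (f := fun p : {p : F[X] // p.Monic} => x ^ p.1.natDegree)
      (g := fun p : {p : F[X] // p.Monic} => y ^ p.1.natDegree) hfx hfy,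
      tsum_monic F x hx, tsum_monic F y hy]
  have e2 : ∀ z : {p : F[X] // p.Monic} ×
      {rs : {p : F[X] // p.Monic} × {p : F[X] // p.Monic} // IsCoprime rs.1.1 rs.2.1},
      x ^ ((psiEquiv F) z).1.1.natDegree * y ^ ((psiEquiv F) z).2.1.natDegree
        = (x * y) ^ z.1.1.natDegree *
          (x ^ z.2.1.1.1.natDegree * y ^ z.2.1.2.1.natDegree) := by
    rintro ⟨⟨D, hD⟩, ⟨⟨⟨R, hR⟩, ⟨S, hS⟩⟩, hc⟩⟩
    show x ^ (D * R).natDegree * y ^ (D * S).natDegree = _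
    rw [Polynomial.natDegree_mul hD.ne_zero hR.ne_zero,
      Polynomial.natDegree_mul hD.ne_zero hS.ne_zero, mul_pow, pow_add, pow_add]
    ring
  have e1 : ∑' p : {p : F[X] // p.Monic} × {p : F[X] // p.Monic},
      x ^ p.1.1.natDegree * y ^ p.2.1.natDegree
      = ∑' z : {p : F[X] // p.Monic} ×
          {rs : {p : F[X] // p.Monic} × {p : F[X] // p.Monic} // IsCoprime rs.1.1 rs.2.1},
        (x * y) ^ z.1.1.natDegree * (x ^ z.2.1.1.1.natDegree * y ^ z.2.1.2.1.natDegree) := by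
    rw [← Equiv.tsum_eq (psiEquiv F)
      (fun p => x ^ p.1.1.natDegree * y ^ p.2.1.natDegree)]
    exact tsum_congr e2
  have e3 : ∑' z : {p : F[X] // p.Monic} ×
        {rs : {p : F[X] // p.Monic} × {p : F[X] // p.Monic} // IsCoprime rs.1.1 rs.2.1},
      (x * y) ^ z.1.1.natDegree * (x ^ z.2.1.1.1.natDegree * y ^ z.2.1.2.1.natDegree)
      = (1 - q * (x * y))⁻¹ * ∑' rs : {rs : {p : F[X] // p.Monic} × {p : F[X] // p.Monic} //
          IsCoprime rs.1.1 rs.2.1}, x ^ rs.1.1.1.natDegree * y ^ rs.1.2.1.natDegree := by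
    rw [aux_tsum_mul (f := fun p : {p : F[X] // p.Monic} => (x * y) ^ p.1.natDegree)
      (g := fun rs : {rs : {p : F[X] // p.Monic} × {p : F[X] // p.Monic} //
          IsCoprime rs.1.1 rs.2.1} => x ^ rs.1.1.1.natDegree * y ^ rs.1.2.1.natDegree)
      hfxy (summable_cop_abs F x y hx hy), tsum_monic F (x * y) hxy]
  have hne : (1 : ℝ) - q * (x * y) ≠ 0 := by
    have : |q * (x * y)| < 1 := by
      rwa [abs_mul, abs_of_nonneg hq0]
    have := (abs_lt.mp this).2
    linarith
  have hcomb : (1 - q * x)⁻¹ * (1 - q * y)⁻¹ = (1 - q * (x * y))⁻¹ *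
      ∑' rs : {rs : {p : F[X] // p.Monic} × {p : F[X] // p.Monic} //
          IsCoprime rs.1.1 rs.2.1}, x ^ rs.1.1.1.natDegree * y ^ rs.1.2.1.natDegree := by
    rw [← e0, e1, e3]
  rw [hcomb, ← mul_assoc, mul_inv_cancel₀ hne, one_mul]

end Cop

set_option maxHeartbeats 1000000 in
theorem stmt_18 (F : Type*) [Field F] [Fintype F] (t1 t2 t3 t4 : ℝ)
    (h1 : |t1| < (Real.sqrt (Fintype.card F))⁻¹ / 2)
    (h2 : |t2| < (Real.sqrt (Fintype.card F))⁻¹ / 2)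
    (h3 : |t3| < (Real.sqrt (Fintype.card F))⁻¹ / 2)
    (h4 : |t4| < (Real.sqrt (Fintype.card F))⁻¹ / 2) :
    ∑' x : {x : Polynomial F × Polynomial F × Polynomial F × Polynomial F //
        x.1.Monic ∧ x.2.1.Monic ∧ x.2.2.1.Monic ∧ x.2.2.2.Monic ∧
          x.1 * x.2.2.1 = x.2.1 * x.2.2.2},
        t1 ^ x.1.1.natDegree * t2 ^ x.1.2.1.natDegree *
            t3 ^ x.1.2.2.1.natDegree * t4 ^ x.1.2.2.2.natDegree /
          Real.sqrt (Fintype.card F) ^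
            (x.1.1.natDegree + x.1.2.1.natDegree + x.1.2.2.1.natDegree + x.1.2.2.2.natDegree)
      = (∑' a : ℕ × ℕ × ℕ × ℕ,
            t1 ^ (a.1 + a.2.2.1) * t2 ^ (a.1 + a.2.2.2) *
              t3 ^ (a.2.1 + a.2.2.2) * t4 ^ (a.2.1 + a.2.2.1)) -
          (Fintype.card F : ℝ)⁻¹ *
            ∑' a : ℕ × ℕ × ℕ × ℕ,
              t1 ^ (a.1 + a.2.2.1 + 1) * t2 ^ (a.1 + a.2.2.2 + 1) *
                t3 ^ (a.2.1 + a.2.2.2 + 1) * t4 ^ (a.2.1 + a.2.2.1 + 1) := by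
  classical
  set qc : ℝ := (Fintype.card F : ℝ) with hqdef
  set sq : ℝ := Real.sqrt (Fintype.card F) with hsqdef
  have hq1 : (1 : ℝ) ≤ qc := by
    rw [hqdef]; exact_mod_cast Nat.one_le_iff_ne_zero.mpr Fintype.card_ne_zero
  have hq0 : (0 : ℝ) < qc := lt_of_lt_of_le zero_lt_one hq1
  have hsq0 : (0 : ℝ) < sq := Real.sqrt_pos.mpr hq0
  have hsqsq : sq * sq = qc := Real.mul_self_sqrt (le_of_lt hq0)
  have hsq1 : (1 : ℝ) ≤ sq := by nlinarith
  have hinv : sq⁻¹ ≤ 1 := by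
    have := mul_inv_cancel₀ (ne_of_gt hsq0); nlinarith
  -- pairwise bounds
  have hsmall : ∀ {a b : ℝ}, |a| < sq⁻¹ / 2 → |b| < sq⁻¹ / 2 → |a * b| < 1 := by
    intro a b ha hb
    rw [abs_mul]
    have h := mul_lt_mul'' ha hb (abs_nonneg a) (abs_nonneg b)
    nlinarith [abs_nonneg a, abs_nonneg b]
  have h12 : |t1 * t2| < 1 := hsmall h1 h2
  have h34 : |t3 * t4| < 1 := hsmall h3 h4
  have h14 : |t1 * t4| < 1 := hsmall h1 h4
  have h23 : |t2 * t3| < 1 := hsmall h2 h3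
  -- u variables
  have hqu : ∀ a b : ℝ, qc * (a / sq * (b / sq)) = a * b := by
    intro a b
    rw [div_mul_div_comm, hsqsq]
    field_simp
  have hquabs : ∀ a b : ℝ, qc * |a / sq * (b / sq)| = |a * b| := by
    intro a b
    calc qc * |a / sq * (b / sq)| = |qc| * |a / sq * (b / sq)| := by rw [abs_of_pos hq0]
      _ = |qc * (a / sq * (b / sq))| := (abs_mul _ _).symm
      _ = |a * b| := by rw [hqu]
  have hu12 : qc * |t1 / sq * (t2 / sq)| < 1 := by rw [hquabs]; exact h12
  have hu34 : qc * |t3 / sq * (t4 / sq)| < 1 := by rw [hquabs]; exact h34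
  have hu14 : qc * |t1 / sq * (t4 / sq)| < 1 := by rw [hquabs]; exact h14
  have hu23 : qc * |t2 / sq * (t3 / sq)| < 1 := by rw [hquabs]; exact h23
  -- LHS
  have hL : ∑' x : {x : Polynomial F × Polynomial F × Polynomial F × Polynomial F //
        x.1.Monic ∧ x.2.1.Monic ∧ x.2.2.1.Monic ∧ x.2.2.2.Monic ∧
          x.1 * x.2.2.1 = x.2.1 * x.2.2.2},
        t1 ^ x.1.1.natDegree * t2 ^ x.1.2.1.natDegree *
            t3 ^ x.1.2.2.1.natDegree * t4 ^ x.1.2.2.2.natDegree /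
          sq ^ (x.1.1.natDegree + x.1.2.1.natDegree + x.1.2.2.1.natDegree + x.1.2.2.2.natDegree)
      = ∑' z : {p : F[X] // p.Monic} × {p : F[X] // p.Monic} ×
          {rs : {p : F[X] // p.Monic} × {p : F[X] // p.Monic} // IsCoprime rs.1.1 rs.2.1},
          (t1 / sq * (t2 / sq)) ^ z.1.1.natDegree *
            ((t3 / sq * (t4 / sq)) ^ z.2.1.1.natDegree *
              ((t1 / sq * (t4 / sq)) ^ z.2.2.1.1.1.natDegree *
                (t2 / sq * (t3 / sq)) ^ z.2.2.1.2.1.natDegree)) := by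
    rw [← Equiv.tsum_eq (phiEquiv F)]
    refine tsum_congr ?_
    rintro ⟨⟨G, hG⟩, ⟨H, hH⟩, ⟨⟨⟨R, hR⟩, ⟨S, hS⟩⟩, hc⟩⟩
    show t1 ^ (G * R).natDegree * t2 ^ (G * S).natDegree *
        t3 ^ (H * S).natDegree * t4 ^ (H * R).natDegree /
          sq ^ ((G * R).natDegree + (G * S).natDegree + (H * S).natDegree + (H * R).natDegree)
      = _
    rw [Polynomial.natDegree_mul hG.ne_zero hR.ne_zero,
      Polynomial.natDegree_mul hG.ne_zero hS.ne_zero,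
      Polynomial.natDegree_mul hH.ne_zero hS.ne_zero,
      Polynomial.natDegree_mul hH.ne_zero hR.ne_zero]
    simp only [div_eq_mul_inv, pow_add, mul_pow, inv_pow]
    ring
  have hcopabs := summable_cop_abs F (t1 / sq * (t4 / sq)) (t2 / sq * (t3 / sq)) hu14 hu23
  have hmabs34 : Summable fun p : {p : F[X] // p.Monic} =>
      |(t3 / sq * (t4 / sq)) ^ p.1.natDegree| :=
    (summable_monic_abs F _ hu34).congr fun p => (abs_pow _ _).symm
  have hmabs12 : Summable fun p : {p : F[X] // p.Monic} =>
      |(t1 / sq * (t2 / sq)) ^ p.1.natDegree| :=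
    (summable_monic_abs F _ hu12).congr fun p => (abs_pow _ _).symm
  have hinner : Summable fun w : {p : F[X] // p.Monic} ×
      {rs : {p : F[X] // p.Monic} × {p : F[X] // p.Monic} // IsCoprime rs.1.1 rs.2.1} =>
      |(t3 / sq * (t4 / sq)) ^ w.1.1.natDegree *
        ((t1 / sq * (t4 / sq)) ^ w.2.1.1.1.natDegree *
          (t2 / sq * (t3 / sq)) ^ w.2.1.2.1.natDegree)| :=
    aux_summable_mul_abs (f := fun p : {p : F[X] // p.Monic} =>
        (t3 / sq * (t4 / sq)) ^ p.1.natDegree)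
      (g := fun rs : {rs : {p : F[X] // p.Monic} × {p : F[X] // p.Monic} //
          IsCoprime rs.1.1 rs.2.1} =>
        (t1 / sq * (t4 / sq)) ^ rs.1.1.1.natDegree * (t2 / sq * (t3 / sq)) ^ rs.1.2.1.natDegree)
      hmabs34 hcopabs
  have hL2 : ∑' z : {p : F[X] // p.Monic} × {p : F[X] // p.Monic} ×
          {rs : {p : F[X] // p.Monic} × {p : F[X] // p.Monic} // IsCoprime rs.1.1 rs.2.1},
          (t1 / sq * (t2 / sq)) ^ z.1.1.natDegree *
            ((t3 / sq * (t4 / sq)) ^ z.2.1.1.natDegree *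
              ((t1 / sq * (t4 / sq)) ^ z.2.2.1.1.1.natDegree *
                (t2 / sq * (t3 / sq)) ^ z.2.2.1.2.1.natDegree))
      = (1 - qc * (t1 / sq * (t2 / sq)))⁻¹ *
        ((1 - qc * (t3 / sq * (t4 / sq)))⁻¹ *
          ((1 - qc * (t1 / sq * (t4 / sq) * (t2 / sq * (t3 / sq)))) *
            ((1 - qc * (t1 / sq * (t4 / sq)))⁻¹ * (1 - qc * (t2 / sq * (t3 / sq)))⁻¹))) := by
    rw [aux_tsum_mul (f := fun p : {p : F[X] // p.Monic} =>
        (t1 / sq * (t2 / sq)) ^ p.1.natDegree)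
      (g := fun w : {p : F[X] // p.Monic} ×
          {rs : {p : F[X] // p.Monic} × {p : F[X] // p.Monic} // IsCoprime rs.1.1 rs.2.1} =>
        (t3 / sq * (t4 / sq)) ^ w.1.1.natDegree *
          ((t1 / sq * (t4 / sq)) ^ w.2.1.1.1.natDegree *
            (t2 / sq * (t3 / sq)) ^ w.2.1.2.1.natDegree)) hmabs12 hinner]
    rw [aux_tsum_mul (f := fun p : {p : F[X] // p.Monic} =>
        (t3 / sq * (t4 / sq)) ^ p.1.natDegree)
      (g := fun rs : {rs : {p : F[X] // p.Monic} × {p : F[X] // p.Monic} //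
          IsCoprime rs.1.1 rs.2.1} =>
        (t1 / sq * (t4 / sq)) ^ rs.1.1.1.natDegree * (t2 / sq * (t3 / sq)) ^ rs.1.2.1.natDegree)
      hmabs34 hcopabs]
    rw [tsum_monic F _ hu12, tsum_monic F _ hu34, cop_eval F _ _ hu14 hu23]
  -- RHS sums
  have hR1 : (∑' a : ℕ × ℕ × ℕ × ℕ,
        t1 ^ (a.1 + a.2.2.1) * t2 ^ (a.1 + a.2.2.2) *
          t3 ^ (a.2.1 + a.2.2.2) * t4 ^ (a.2.1 + a.2.2.1))
      = (1 - t1 * t2)⁻¹ * ((1 - t3 * t4)⁻¹ * ((1 - t1 * t4)⁻¹ * (1 - t2 * t3)⁻¹)) := by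
    rw [tsum_congr (fun a : ℕ × ℕ × ℕ × ℕ => by
      rw [pow_add, pow_add, pow_add, pow_add, mul_pow, mul_pow, mul_pow, mul_pow]; ring_nf :
      ∀ a : ℕ × ℕ × ℕ × ℕ,
        t1 ^ (a.1 + a.2.2.1) * t2 ^ (a.1 + a.2.2.2) *
          t3 ^ (a.2.1 + a.2.2.2) * t4 ^ (a.2.1 + a.2.2.1)
        = (t1 * t2) ^ a.1 * ((t3 * t4) ^ a.2.1 *
            ((t1 * t4) ^ a.2.2.1 * (t2 * t3) ^ a.2.2.2)))]
    exact aux_tsum_nat4 h12 h34 h14 h23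
  have hR2 : (∑' a : ℕ × ℕ × ℕ × ℕ,
        t1 ^ (a.1 + a.2.2.1 + 1) * t2 ^ (a.1 + a.2.2.2 + 1) *
          t3 ^ (a.2.1 + a.2.2.2 + 1) * t4 ^ (a.2.1 + a.2.2.1 + 1))
      = (t1 * t2 * t3 * t4) *
        ((1 - t1 * t2)⁻¹ * ((1 - t3 * t4)⁻¹ * ((1 - t1 * t4)⁻¹ * (1 - t2 * t3)⁻¹))) := by
    rw [tsum_congr (fun a : ℕ × ℕ × ℕ × ℕ => by
      rw [pow_succ, pow_succ, pow_succ, pow_succ, pow_add, pow_add, pow_add, pow_add,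
        mul_pow, mul_pow, mul_pow, mul_pow]; ring_nf :
      ∀ a : ℕ × ℕ × ℕ × ℕ,
        t1 ^ (a.1 + a.2.2.1 + 1) * t2 ^ (a.1 + a.2.2.2 + 1) *
          t3 ^ (a.2.1 + a.2.2.2 + 1) * t4 ^ (a.2.1 + a.2.2.1 + 1)
        = (t1 * t2 * t3 * t4) * ((t1 * t2) ^ a.1 * ((t3 * t4) ^ a.2.1 *
            ((t1 * t4) ^ a.2.2.1 * (t2 * t3) ^ a.2.2.2))))]
    rw [tsum_mul_left, aux_tsum_nat4 h12 h34 h14 h23]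
  rw [hL, hL2, hR1, hR2]
  rw [hqu t1 t2, hqu t3 t4, hqu t1 t4, hqu t2 t3]
  have hlast : qc * (t1 / sq * (t4 / sq) * (t2 / sq * (t3 / sq)))
      = qc⁻¹ * (t1 * t4 * (t2 * t3)) := by
    have e1 : t1 / sq * (t4 / sq) * (t2 / sq * (t3 / sq))
        = (t1 * t4) / qc * ((t2 * t3) / qc) := by
      rw [div_mul_div_comm, div_mul_div_comm, hsqsq]
    rw [e1, div_mul_div_comm]
    field_simp
  rw [hlast]
  ring
end
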